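/- arXiv:2602.17983 — 2 statements merged into one kernel-verified Lean document; each statement's English description precedes it below -/
import Mathlib

section
/- Let Λ be a Coxeter diagram and let Λ′ be an admissible induced subdiagram of Λ that is a tree, such that the relative Artin complex Δ = Δ_{Λ,Λ′} satisfies the labeled 4-cycle condition. Let x₁x₂x₃x₄ be an embedded 4-cycle in Δ (four pairwise distinct vertices with xᵢ adjacent to xᵢ₊₁ cyclically), where xᵢ has type âᵢ with aᵢ ∈ Λ′, such that a₁, a₂, a₃ are the three valence-one vertices of a tripod subdiagram Λ″ of Λ′ and a₄ = a₂. Then either x₁ is adjacent to x₃, or there is a vertex y of Δ adjacent to each of x₁, x₂, x₃, x₄ whose type â satisfies that a lies on the path in Λ″ from the valence-three vertex of Λ″ to a₂ (endpoints included). -/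
open scoped Pointwise

/-- A *Coxeter diagram* on a vertex set `S`: a symmetric labeling `M` with `M s s = 1`,
and for `s ≠ t` the label `M s t` lies in `{2, 3, 4, …} ∪ {∞}`, where `0` encodes the
label `∞` and label `2` means that `s` and `t` are not joined by an edge. -/
structure CoxDiagram (S : Type*) where
  M : S → S → ℕ
  symm : ∀ s t, M s t = M t s
  diag : ∀ s, M s s = 1
  offDiag : ∀ s t, s ≠ t → M s t ≠ 1

namespace CoxDiagram

variable {S : Type*}

/-- The underlying graph of a Coxeter diagram: `s` and `t` are joined exactly when
`M s t ≠ 2`. -/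
def graph (Λ : CoxDiagram S) : SimpleGraph S where
  Adj s t := s ≠ t ∧ Λ.M s t ≠ 2
  symm := by
    constructor
    intro s t h
    exact ⟨h.1.symm, by rw [Λ.symm t s]; exact h.2⟩
  loopless := by
    constructor
    intro s h
    exact h.1 rfl

/-- The alternating word `s t s t ⋯` of length `n` in the free group on `S`. -/
def altWord (s t : S) : ℕ → FreeGroup S
  | 0 => 1
  | n + 1 => FreeGroup.of s * altWord t s n

/-- The braid relations of the Artin group of `Λ` : for each pair `s, t` with
`M s t ≠ ∞`, the relation `sts⋯ = tst⋯` (both sides alternating of length `M s t`). -/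
def artinRels (Λ : CoxDiagram S) : Set (FreeGroup S) :=
  {w | ∃ s t : S, Λ.M s t ≠ 0 ∧
    w = altWord s t (Λ.M s t) * (altWord t s (Λ.M s t))⁻¹}

/-- The Artin group of the Coxeter diagram `Λ`. -/
def ArtinGroup (Λ : CoxDiagram S) : Type _ := PresentedGroup (artinRels Λ)

instance (Λ : CoxDiagram S) : Group (ArtinGroup Λ) :=
  inferInstanceAs (Group (PresentedGroup (artinRels Λ)))

/-- The standard generator of the Artin group corresponding to `s ∈ S`. -/
def gen (Λ : CoxDiagram S) (s : S) : ArtinGroup Λ := PresentedGroup.of s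

/-- The standard parabolic subgroup `A_T` of the Artin group, generated by `T ⊆ S`. -/
def parab (Λ : CoxDiagram S) (T : Set S) : Subgroup (ArtinGroup Λ) :=
  Subgroup.closure (Λ.gen '' T)

/-- A vertex of (a subdivision of) the Artin complex of `Λ`: a left coset of the standard
parabolic subgroup `A_{S ∖ T}` generated by the complement of a set `T` of generators.
Vertices of the Artin complex itself are those with `T` a singleton `{s}` (of type `ŝ`). -/
def PVertex (Λ : CoxDiagram S) : Type _ := Σ T : Set S, ArtinGroup Λ ⧸ Λ.parab Tᶜ

/-- The cosets corresponding to two vertices intersect. -/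
def pmeets {Λ : CoxDiagram S} (v w : PVertex Λ) : Prop :=
  ∃ g : ArtinGroup Λ, QuotientGroup.mk g = v.2 ∧ QuotientGroup.mk g = w.2

/-- Adjacency in the Artin complex: the vertices are distinct and their cosets meet. -/
def adjV {Λ : CoxDiagram S} (v w : PVertex Λ) : Prop := v ≠ w ∧ pmeets v w

/-- `a` and `b` are connected by an edge path of `G` all of whose vertices lie in `U`. -/
def ConnIn {V : Type*} (G : SimpleGraph V) (U : Set V) (a b : V) : Prop :=
  Relation.ReflTransGen (fun u v => u ∈ U ∧ v ∈ U ∧ G.Adj u v) a b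

/-- The induced subdiagram on `S'` is *admissible*: vertices of `S'` in different
components of `S' ∖ {s}` lie in different components of `S ∖ {s}`. -/
def Admissible (Λ : CoxDiagram S) (S' : Set S) : Prop :=
  ∀ s ∈ S', ∀ t ∈ S', ∀ r ∈ S', t ≠ s → r ≠ s →
    ConnIn Λ.graph {x : S | x ≠ s} t r → ConnIn Λ.graph {x : S | x ∈ S' ∧ x ≠ s} t r

/-- `s` belongs to the smallest subtree of (the tree) `S'` containing `A`, i.e. `s`
belongs to every connected subset of `S'` containing `A`. -/
def InMinSubtree (Λ : CoxDiagram S) (S' : Set S) (A : Set S) (s : S) : Prop :=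
  ∀ T : Set S, T ⊆ S' → (∀ a ∈ T, ∀ b ∈ T, ConnIn Λ.graph T a b) → A ⊆ T → s ∈ T

/-- The relative Artin complex `Δ_{Λ, S'}` satisfies the *labeled 4-cycle condition*:
every induced 4-cycle `x₁ x₂ x₃ x₄` of vertex types `ŝ₁ ŝ₂ ŝ₃ ŝ₄` with `sᵢ ∈ S'` admits a
vertex adjacent to all four whose type `ŝ` satisfies that `s` lies in the smallest
subtree of `S'` containing `s₁, s₂, s₃, s₄`. -/
def Labeled4Cycle (Λ : CoxDiagram S) (S' : Set S) : Prop :=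
  ∀ (x₁ x₂ x₃ x₄ : PVertex Λ) (s₁ s₂ s₃ s₄ : S),
    s₁ ∈ S' → s₂ ∈ S' → s₃ ∈ S' → s₄ ∈ S' →
    x₁.1 = {s₁} → x₂.1 = {s₂} → x₃.1 = {s₃} → x₄.1 = {s₄} →
    adjV x₁ x₂ → adjV x₂ x₃ → adjV x₃ x₄ → adjV x₄ x₁ →
    x₁ ≠ x₃ → x₂ ≠ x₄ → ¬ pmeets x₁ x₃ → ¬ pmeets x₂ x₄ →
    ∃ (x : PVertex Λ) (s : S), s ∈ S' ∧ x.1 = {s} ∧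
      adjV x x₁ ∧ adjV x x₂ ∧ adjV x x₃ ∧ adjV x x₄ ∧
      InMinSubtree Λ S' {s₁, s₂, s₃, s₄} s

/-- A `D_{n+1}`-like subdiagram, given by `b 1, …, b (n+1)`: the vertices `b 1` and `b 2`
are each joined to `b 3`, and `b 3, b 4, …, b (n+1)` is a path; the subdiagram is induced
(no other edges) and the edge labels are arbitrary. -/
def IsDLike (Λ : CoxDiagram S) (n : ℕ) (b : ℕ → S) : Prop :=
  2 ≤ n ∧
  (∀ i j, 1 ≤ i → i ≤ n + 1 → 1 ≤ j → j ≤ n + 1 → b i = b j → i = j) ∧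
  (∀ i j, 1 ≤ i → i ≤ n + 1 → 1 ≤ j → j ≤ n + 1 →
    (Λ.graph.Adj (b i) (b j) ↔
      ((i = 1 ∧ j = 3) ∨ (i = 3 ∧ j = 1) ∨ (i = 2 ∧ j = 3) ∨ (i = 3 ∧ j = 2) ∨
        (3 ≤ i ∧ j = i + 1) ∨ (3 ≤ j ∧ i = j + 1))))

/-- The vertex set of a `D`-like subdiagram. -/
def DSet (b : ℕ → S) (n : ℕ) : Set S := {s : S | ∃ i, 1 ≤ i ∧ i ≤ n + 1 ∧ s = b i}

/-- The `τ`-value of a vertex-type of the `(b 1, b 2)`-subdivision: `τ = 1` on types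
`b̂ 1`, `b̂ 2`; `τ = 2` on midpoint vertices (cosets of `A_{S ∖ {b 1, b 2}}`); and
`τ = i` on type `b̂ i` for `3 ≤ i ≤ n + 1`. -/
def subdivTau (b : ℕ → S) (n : ℕ) (T : Set S) (k : ℕ) : Prop :=
  (k = 1 ∧ (T = {b 1} ∨ T = {b 2})) ∨ (k = 2 ∧ T = ({b 1, b 2} : Set S)) ∨
    (3 ≤ k ∧ k ≤ n + 1 ∧ T = {b k})

/-- `v` is a vertex of the `(b 1, b 2)`-subdivision of `Δ_{Λ, Λ₀}`. -/
def SubOk {Λ : CoxDiagram S} (b : ℕ → S) (n : ℕ) (v : PVertex Λ) : Prop :=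
  v.1 = ({b 1, b 2} : Set S) ∨ ∃ i, 1 ≤ i ∧ i ≤ n + 1 ∧ v.1 = {b i}

/-- The partial order on the vertices of the `(b 1, b 2)`-subdivision: `v < w` iff the
cosets intersect and `τ v < τ w`. -/
def SubLt {Λ : CoxDiagram S} (b : ℕ → S) (n : ℕ) (v w : PVertex Λ) : Prop :=
  pmeets v w ∧ ∃ k l, subdivTau b n v.1 k ∧ subdivTau b n w.1 l ∧ k < l

end CoxDiagram

section RelDefs

variable {X : Type*} (lt : X → X → Prop)

/-- The reflexive closure of a strict relation. -/
def RelLe (a b : X) : Prop := lt a b ∨ a = b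

/-- A relation is *bowtie free* if every quasi-bowtie has a center. -/
def RelBowtieFree : Prop :=
  ∀ x₁ y₁ x₂ y₂ : X, lt x₁ y₁ → lt x₁ y₂ → lt x₂ y₁ → lt x₂ y₂ →
    ∃ z : X, RelLe lt x₁ z ∧ RelLe lt x₂ z ∧ RelLe lt z y₁ ∧ RelLe lt z y₂

/-- *Upward flag*: three pairwise upper-bounded elements have a common upper bound. -/
def RelUpwardFlag : Prop :=
  ∀ p₁ p₂ p₃ : X, (∃ q, RelLe lt p₁ q ∧ RelLe lt p₂ q) →
    (∃ q, RelLe lt p₂ q ∧ RelLe lt p₃ q) → (∃ q, RelLe lt p₁ q ∧ RelLe lt p₃ q) →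
    ∃ q, RelLe lt p₁ q ∧ RelLe lt p₂ q ∧ RelLe lt p₃ q

/-- *Downward flag*: three pairwise lower-bounded elements have a common lower bound. -/
def RelDownwardFlag : Prop :=
  ∀ p₁ p₂ p₃ : X, (∃ q, RelLe lt q p₁ ∧ RelLe lt q p₂) →
    (∃ q, RelLe lt q p₂ ∧ RelLe lt q p₃) → (∃ q, RelLe lt q p₁ ∧ RelLe lt q p₃) →
    ∃ q, RelLe lt q p₁ ∧ RelLe lt q p₂ ∧ RelLe lt q p₃

/-- `q` is a maximal element. -/
def RelMaximalEl (q : X) : Prop := ∀ w, ¬ lt q w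

/-- `q` is a minimal element. -/
def RelMinimalEl (q : X) : Prop := ∀ w, ¬ lt w q

/-- *Weakly upward flag*: whenever each pair among three elements has a non-maximal upper
bound, the three have a common upper bound. -/
def RelWeaklyUpwardFlag : Prop :=
  ∀ p₁ p₂ p₃ : X,
    (∃ q, RelLe lt p₁ q ∧ RelLe lt p₂ q ∧ ¬ RelMaximalEl lt q) →
    (∃ q, RelLe lt p₂ q ∧ RelLe lt p₃ q ∧ ¬ RelMaximalEl lt q) →
    (∃ q, RelLe lt p₁ q ∧ RelLe lt p₃ q ∧ ¬ RelMaximalEl lt q) →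
    ∃ q, RelLe lt p₁ q ∧ RelLe lt p₂ q ∧ RelLe lt p₃ q

/-- *Weakly downward flag*: dual of weakly upward flag. -/
def RelWeaklyDownwardFlag : Prop :=
  ∀ p₁ p₂ p₃ : X,
    (∃ q, RelLe lt q p₁ ∧ RelLe lt q p₂ ∧ ¬ RelMinimalEl lt q) →
    (∃ q, RelLe lt q p₂ ∧ RelLe lt q p₃ ∧ ¬ RelMinimalEl lt q) →
    (∃ q, RelLe lt q p₁ ∧ RelLe lt q p₃ ∧ ¬ RelMinimalEl lt q) →
    ∃ q, RelLe lt q p₁ ∧ RelLe lt q p₂ ∧ RelLe lt q p₃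

/-- *Weakly flag*: weakly upward and weakly downward flag. -/
def RelWeaklyFlag : Prop := RelWeaklyUpwardFlag lt ∧ RelWeaklyDownwardFlag lt

end RelDefs

open CoxDiagram

namespace CoxDiagram

variable {S : Type*}

/-- The valence of `v` within the induced subdiagram on `T`. -/
noncomputable def degIn (Λ : CoxDiagram S) (T : Set S) (v : S) : ℕ :=
  Set.ncard {u : S | u ∈ T ∧ Λ.graph.Adj v u}

/-- `T` (with branch vertex `c`) is a *tripod* subdiagram: the induced subdiagram on `T`
is a tree, `c` has valence three in it, and every other vertex has valence one or two. -/
def IsTripod (Λ : CoxDiagram S) (T : Set S) (c : S) : Prop :=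
  (Λ.graph.induce T).IsTree ∧ c ∈ T ∧ degIn Λ T c = 3 ∧
    ∀ v ∈ T, v ≠ c → (degIn Λ T v = 1 ∨ degIn Λ T v = 2)

/-- `a` lies on the path in the tree `T` from `p` to `q` (endpoints included): `a ∈ T`
and either `a` is an endpoint or removing `a` disconnects `p` from `q` within `T`. -/
def OnTreePath (Λ : CoxDiagram S) (T : Set S) (p q a : S) : Prop :=
  a ∈ T ∧ (a = p ∨ a = q ∨ ¬ ConnIn Λ.graph (T \ {a}) p q)

end CoxDiagram
section GraphHelpers

open SimpleGraph

variable {V : Type*} {G : SimpleGraph V}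

lemma connIn_mono {X Y : Set V} (h : X ⊆ Y) {a b : V} (hc : ConnIn G X a b) :
    ConnIn G Y a b :=
  Relation.ReflTransGen.mono (fun _ _ huv => ⟨h huv.1, h huv.2.1, huv.2.2⟩) _ _ hc

lemma connIn_symm {X : Set V} {a b : V} (hc : ConnIn G X a b) : ConnIn G X b a :=
  haveI : Std.Symm (fun u v => u ∈ X ∧ v ∈ X ∧ G.Adj u v) :=
    ⟨fun _ _ huv => ⟨huv.2.1, huv.1, huv.2.2.symm⟩⟩
  Relation.ReflTransGen.symmetric.symm _ _ hc

lemma connIn_of_walk {X : Set V} : ∀ {a b : ↥X}, (G.induce X).Walk a b →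
    ConnIn G X ↑a ↑b := by
  intro a b w
  induction w with
  | nil => exact Relation.ReflTransGen.refl
  | @cons u v w h p ih => exact Relation.ReflTransGen.head ⟨u.2, v.2, h⟩ ih

lemma walk_of_connIn {X : Set V} {a b : V} (hc : ConnIn G X a b) (ha : a ∈ X) :
    ∃ hb : b ∈ X, Nonempty ((G.induce X).Walk ⟨a, ha⟩ ⟨b, hb⟩) := by
  induction hc with
  | refl => exact ⟨ha, ⟨SimpleGraph.Walk.nil⟩⟩
  | tail hrel hstep ih =>
      obtain ⟨hb, ⟨w⟩⟩ := ih
      exact ⟨hstep.2.1, ⟨w.concat hstep.2.2⟩⟩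

lemma connIn_pass {X : Set V} {z a b : V} (hc : ConnIn G X a b) :
    ConnIn G (X \ {z}) a b ∨ ConnIn G X a z := by
  induction hc using Relation.ReflTransGen.head_induction_on with
  | refl => exact Or.inl Relation.ReflTransGen.refl
  | @head u m hstep htail ih =>
      by_cases huz : u = z
      · exact Or.inr (huz ▸ Relation.ReflTransGen.refl)
      by_cases hmz : m = z
      · exact Or.inr (Relation.ReflTransGen.single (hmz ▸ hstep))
      rcases ih with h | h
      · exact Or.inl (Relation.ReflTransGen.head
          ⟨⟨hstep.1, huz⟩, ⟨hstep.2.1, hmz⟩, hstep.2.2⟩ h)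
      · exact Or.inr (Relation.ReflTransGen.head hstep h)

/-- The inclusion homomorphism between induced subgraphs. -/
def inclHom (G : SimpleGraph V) {X Y : Set V} (h : X ⊆ Y) :
    G.induce X →g G.induce Y :=
  ⟨Set.inclusion h, fun {a b} hab => hab⟩

lemma isPath_concat {u v w : V} {P : G.Walk u v} (hP : P.IsPath)
    (h : G.Adj v w) (hw : w ∉ P.support) : (P.concat h).IsPath := by
  rw [← SimpleGraph.Walk.isPath_reverse_iff, SimpleGraph.Walk.reverse_concat]
  rw [SimpleGraph.Walk.cons_isPath_iff]
  refine ⟨hP.reverse, ?_⟩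
  rw [SimpleGraph.Walk.support_reverse, List.mem_reverse]
  exact hw

lemma not_connIn_of_path {Y : Set V} (hac : (G.induce Y).IsAcyclic)
    {A B sv : ↥Y} (W : (G.induce Y).Walk A B) (hW : W.IsPath) (hs : sv ∈ W.support)
    (hA : (A : V) ≠ (sv : V)) (hB : (B : V) ≠ (sv : V)) :
    ¬ ConnIn G (Y \ {(sv : V)}) ↑A ↑B := by
  classical
  intro hc
  obtain ⟨hb, ⟨w⟩⟩ := walk_of_connIn hc ⟨A.2, hA⟩
  have hsub : Y \ {(sv : V)} ⊆ Y := Set.diff_subset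
  let w' := (w.map (inclHom G hsub)).copy (Subtype.ext rfl) (Subtype.ext rfl)
  have hns : sv ∉ w'.support := by
    intro hmem
    rw [SimpleGraph.Walk.support_copy, SimpleGraph.Walk.support_map] at hmem
    obtain ⟨u, _, hequ⟩ := List.mem_map.mp hmem
    exact u.2.2 (show (u : V) ∈ {(sv : V)} from by
      have : ((Set.inclusion hsub u : ↥Y) : V) = (sv : V) := congrArg Subtype.val hequ
      simpa using this)
  have huniq : (⟨W, hW⟩ : (G.induce Y).Path A B) = ⟨w'.bypass, w'.bypass_isPath⟩ :=
    hac.path_unique _ _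
  apply hns
  apply w'.support_bypass_subset
  have : W = w'.bypass := congrArg Subtype.val huniq
  exact this ▸ hs

end GraphHelpers
section LeafHelpers

open SimpleGraph

variable {S : Type*} [Fintype S]

lemma ext_aux (Λ : CoxDiagram S) (T : Set S)
    (htr : (Λ.graph.induce T).IsTree) (u : ↥T) :
    ∀ (n : ℕ) (v : ↥T) (P : (Λ.graph.induce T).Walk u v), P.IsPath → v ≠ u →
      Nat.card ↥T - P.length ≤ n →
      ∃ ℓ : ↥T, degIn Λ T ↑ℓ = 1 ∧ ConnIn Λ.graph (T \ {(u : S)}) ↑v ↑ℓ := by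
  classical
  haveI : Fintype ↥T := Fintype.ofFinite _
  rw [Nat.card_eq_fintype_card]
  intro n
  induction n with
  | zero =>
      intro v P hP _ hlen
      exact absurd hP.length_lt (by omega)
  | succ n ih =>
      intro v P hP hvu _hlen
      by_cases hex : ∃ w : ↥T, (Λ.graph.induce T).Adj v w ∧ w ∉ P.support
      · obtain ⟨w, hadj, hwP⟩ := hex
        have hP' : (P.concat hadj).IsPath := isPath_concat hP hadj hwP
        have hwu : w ≠ u := fun h => hwP (h ▸ P.start_mem_support)
        obtain ⟨ℓ, hdeg, hconn⟩ := ih w (P.concat hadj) hP' hwu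
          (by rw [SimpleGraph.Walk.length_concat]
              have := hP'.length_lt
              omega)
        refine ⟨ℓ, hdeg, Relation.ReflTransGen.head
          ⟨⟨v.2, ?_⟩, ⟨w.2, ?_⟩, hadj⟩ hconn⟩
        · exact fun h => hvu (Subtype.ext (by simpa using h))
        · exact fun h => hwu (Subtype.ext (by simpa using h))
      · push_neg at hex
        refine ⟨v, ?_, Relation.ReflTransGen.refl⟩
        cases hP2 : P.reverse with
        | nil => exact absurd rfl hvu
        | @cons _ y _ hvy Q =>
            have hRpath : P.reverse.IsPath := hP.reverse
            have hset : {t : S | t ∈ T ∧ Λ.graph.Adj ↑v t} = {(y : S)} := by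
              apply Set.eq_singleton_iff_unique_mem.mpr
              constructor
              · exact ⟨y.2, hvy⟩
              · intro w hw
                set wT : ↥T := ⟨w, hw.1⟩ with hwT
                have hadj' : (Λ.graph.induce T).Adj v wT := hw.2
                have hwv : wT ≠ v := fun h => (Λ.graph.irrefl) (h ▸ hadj' : _)
                by_contra hwy
                have hwyT : wT ≠ y := fun h => hwy (congrArg Subtype.val h)
                have hmemP : wT ∈ P.support := hex wT hadj'
                have hmemR : wT ∈ P.reverse.support := by
                  rw [SimpleGraph.Walk.support_reverse, List.mem_reverse]; exact hmemP
                have htk : (P.reverse.takeUntil wT hmemR).IsPath := hRpath.takeUntil hmemR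
                have hedge : s(wT, v) ∉ (P.reverse.takeUntil wT hmemR).edges := by
                  intro hin
                  have hin2 : s(wT, v) ∈ P.reverse.edges :=
                    SimpleGraph.Walk.edges_takeUntil_subset _ hmemR hin
                  rw [hP2, SimpleGraph.Walk.edges_cons] at hin2
                  rcases List.mem_cons.mp hin2 with h | h
                  · rw [Sym2.eq_iff] at h
                    rcases h with ⟨h1, _⟩ | ⟨h1, h2⟩
                    · exact hwv h1
                    · exact hwyT h1
                  · have : v ∈ Q.support :=
                      SimpleGraph.Walk.snd_mem_support_of_mem_edges Q h
                    rw [hP2, SimpleGraph.Walk.cons_isPath_iff] at hRpath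
                    exact hRpath.2 this
                have hcyc : (SimpleGraph.Walk.cons hadj'.symm
                    (P.reverse.takeUntil wT hmemR)).IsCycle := by
                  rw [SimpleGraph.Walk.cons_isCycle_iff]
                  exact ⟨htk, by
                    rw [show s(wT, (v : ↥T)) = s((v : ↥T), wT) from Sym2.eq_swap] at hedge
                    exact fun hcontra => hedge (by rwa [Sym2.eq_swap] at hcontra)⟩
                exact htr.IsAcyclic _ hcyc
            rw [degIn, hset, Set.ncard_singleton]

lemma ext_leaf (Λ : CoxDiagram S) (T : Set S)
    (htr : (Λ.graph.induce T).IsTree) (u v : ↥T)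
    (h : (Λ.graph.induce T).Adj u v) :
    ∃ ℓ : ↥T, degIn Λ T ↑ℓ = 1 ∧ ConnIn Λ.graph (T \ {(u : S)}) ↑v ↑ℓ := by
  classical
  refine ext_aux Λ T htr u (Nat.card ↥T) v (SimpleGraph.Walk.cons h .nil) ?_ h.ne'
    (by omega)
  rw [SimpleGraph.Walk.cons_isPath_iff]
  exact ⟨SimpleGraph.Walk.IsPath.nil, by simp [h.ne]⟩

end LeafHelpers
section GroupHelpers

open CoxDiagram

variable {S : Type*}

lemma pvertex_eq {Λ : CoxDiagram S} {T : Set S}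
    {q q' : ArtinGroup Λ ⧸ Λ.parab Tᶜ}
    (h : pmeets (⟨T, q⟩ : PVertex Λ) ⟨T, q'⟩) :
    (⟨T, q⟩ : PVertex Λ) = ⟨T, q'⟩ := by
  obtain ⟨g, h1, h2⟩ := h
  exact congrArg (Sigma.mk T) (h1.symm.trans h2)

lemma altWord_two (x y : S) :
    altWord x y 2 = FreeGroup.of x * (FreeGroup.of y * 1) := rfl

lemma commute_gen (Λ : CoxDiagram S) {u v : S} (h : Λ.M u v = 2) :
    Commute (Λ.gen u) (Λ.gen v) := by
  have hrel : altWord u v 2 * (altWord v u 2)⁻¹ ∈ artinRels Λ :=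
    ⟨u, v, by rw [h]; norm_num, by rw [h]⟩
  have h1 : PresentedGroup.mk (artinRels Λ) (altWord u v 2 * (altWord v u 2)⁻¹) = 1 :=
    (QuotientGroup.eq_one_iff _).mpr (Subgroup.subset_normalClosure hrel)
  rw [altWord_two, altWord_two, map_mul, map_inv, map_mul, map_mul, map_one, mul_one,
    mul_one, mul_inv_eq_one] at h1
  exact h1

lemma commute_closure {G : Type*} [Group G] {A B : Set G}
    (h : ∀ a ∈ A, ∀ b ∈ B, Commute a b) :
    ∀ a ∈ Subgroup.closure A, ∀ b ∈ Subgroup.closure B, Commute a b := by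
  intro a ha
  induction ha using Subgroup.closure_induction with
  | mem x hx =>
      intro b hb
      induction hb using Subgroup.closure_induction with
      | mem y hy => exact h x hx y hy
      | one => exact Commute.one_right _
      | mul y z _ _ ihy ihz => exact Commute.mul_right ihy ihz
      | inv y _ ihy => exact Commute.inv_right ihy
  | one => exact fun b _ => Commute.one_left _
  | mul x y _ _ ihx ihy => exact fun b hb => Commute.mul_left (ihx b hb) (ihy b hb)
  | inv x _ ihx => exact fun b hb => Commute.inv_left (ihx b hb)

lemma closure_union_decomp {G : Type*} [Group G] {A B : Set G}
    (h : ∀ a ∈ A, ∀ b ∈ B, Commute a b) :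
    ∀ g ∈ Subgroup.closure (A ∪ B), ∃ u ∈ Subgroup.closure A, ∃ v ∈ Subgroup.closure B,
      g = u * v := by
  have hc := commute_closure h
  intro g hg
  induction hg using Subgroup.closure_induction with
  | mem x hx =>
      rcases hx with hx | hx
      · exact ⟨x, Subgroup.subset_closure hx, 1, one_mem _, (mul_one x).symm⟩
      · exact ⟨1, one_mem _, x, Subgroup.subset_closure hx, (one_mul x).symm⟩
  | one => exact ⟨1, one_mem _, 1, one_mem _, (one_mul 1).symm⟩
  | mul x y _ _ ihx ihy =>
      obtain ⟨u1, hu1, v1, hv1, rfl⟩ := ihx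
      obtain ⟨u2, hu2, v2, hv2, rfl⟩ := ihy
      refine ⟨u1 * u2, mul_mem hu1 hu2, v1 * v2, mul_mem hv1 hv2, ?_⟩
      have : v1 * u2 = u2 * v1 := (hc u2 hu2 v1 hv1).symm
      calc u1 * v1 * (u2 * v2) = u1 * (v1 * u2) * v2 := by group
        _ = u1 * (u2 * v1) * v2 := by rw [this]
        _ = u1 * u2 * (v1 * v2) := by group
  | inv x _ ihx =>
      obtain ⟨u, hu, v, hv, rfl⟩ := ihx
      refine ⟨u⁻¹, inv_mem hu, v⁻¹, inv_mem hv, ?_⟩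
      rw [mul_inv_rev]
      exact ((hc u hu v hv).inv_inv).symm.eq

end GroupHelpers
/-- Let `Λ′` (vertex set `S'`) be an admissible induced tree subdiagram
of `Λ` such that `Δ = Δ_{Λ,Λ′}` satisfies the labeled 4-cycle condition.  Let
`x₁ x₂ x₃ x₄` be an embedded 4-cycle in `Δ` of types `â₁ â₂ â₃ â₂`, where `a₁, a₂, a₃`
are the three valence-one vertices of a tripod subdiagram `T ⊆ S'` with branch vertex
`c`.  Then either `x₁` is adjacent to `x₃`, or there is a vertex `y` of `Δ` adjacent to
each `xᵢ` whose type `â` satisfies that `a` lies on the path in `T` from `c` to `a₂`. -/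
theorem tripod_four_cycle {S : Type*} [Fintype S] (Λ : CoxDiagram S) (S' : Set S)
    (htree : (Λ.graph.induce S').IsTree)
    (hadm : Admissible Λ S')
    (h4 : Labeled4Cycle Λ S')
    (T : Set S) (hTS : T ⊆ S') (c a₁ a₂ a₃ : S)
    (htri : IsTripod Λ T c)
    (ha₁ : a₁ ∈ T) (ha₂ : a₂ ∈ T) (ha₃ : a₃ ∈ T)
    (h12 : a₁ ≠ a₂) (h13 : a₁ ≠ a₃) (h23 : a₂ ≠ a₃)
    (hd₁ : degIn Λ T a₁ = 1) (hd₂ : degIn Λ T a₂ = 1) (hd₃ : degIn Λ T a₃ = 1)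
    (hleaves : ∀ v ∈ T, degIn Λ T v = 1 → v = a₁ ∨ v = a₂ ∨ v = a₃)
    (x₁ x₂ x₃ x₄ : PVertex Λ)
    (ht₁ : x₁.1 = {a₁}) (ht₂ : x₂.1 = {a₂}) (ht₃ : x₃.1 = {a₃}) (ht₄ : x₄.1 = {a₂})
    (hx13 : x₁ ≠ x₃) (hx24 : x₂ ≠ x₄)
    (e12 : adjV x₁ x₂) (e23 : adjV x₂ x₃) (e34 : adjV x₃ x₄) (e41 : adjV x₄ x₁) :
    adjV x₁ x₃ ∨
      ∃ (y : PVertex Λ) (a : S), y.1 = {a} ∧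
        adjV y x₁ ∧ adjV y x₂ ∧ adjV y x₃ ∧ adjV y x₄ ∧
        OnTreePath Λ T c a₂ a := by
  classical
  obtain ⟨T₁, q₁⟩ := x₁
  obtain ⟨T₂, q₂⟩ := x₂
  obtain ⟨T₃, q₃⟩ := x₃
  obtain ⟨T₄, q₄⟩ := x₄
  obtain rfl : T₁ = {a₁} := ht₁
  obtain rfl : T₂ = {a₂} := ht₂
  obtain rfl : T₃ = {a₃} := ht₃
  obtain rfl : T₄ = {a₂} := ht₄
  by_cases hpm13 : pmeets (⟨{a₁}, q₁⟩ : PVertex Λ) ⟨{a₃}, q₃⟩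
  · exact Or.inl ⟨hx13, hpm13⟩
  have hpm24 : ¬ pmeets (⟨{a₂}, q₂⟩ : PVertex Λ) ⟨{a₂}, q₄⟩ := fun h => hx24 (pvertex_eq h)
  obtain ⟨x, s, hsS', hxty, hy1, hy2, hy3, hy4, hmin⟩ :=
    h4 _ _ _ _ a₁ a₂ a₃ a₂ (hTS ha₁) (hTS ha₂) (hTS ha₃) (hTS ha₂)
      rfl rfl rfl rfl e12 e23 e34 e41 hx13 hx24 hpm13 hpm24
  obtain ⟨Tx, qx⟩ := x
  obtain rfl : Tx = {s} := hxty
  have hconnT : ∀ a ∈ T, ∀ b ∈ T, ConnIn Λ.graph T a b := by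
    intro a ha b hb
    exact (htri.1.isConnected.preconnected ⟨a, ha⟩ ⟨b, hb⟩).elim fun w => connIn_of_walk w
  have hsT : s ∈ T := hmin T hTS hconnT (by
    intro t ht
    simp only [Set.mem_insert_iff, Set.mem_singleton_iff] at ht
    rcases ht with rfl | rfl | rfl | rfl <;> assumption)
  have hs1 : s ≠ a₁ := by rintro rfl; exact hy1.1 (pvertex_eq hy1.2)
  have hs2 : s ≠ a₂ := by rintro rfl; exact hy2.1 (pvertex_eq hy2.2)
  have hs3 : s ≠ a₃ := by rintro rfl; exact hy3.1 (pvertex_eq hy3.2)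
  by_cases hsep : ConnIn Λ.graph (S' \ {s}) a₁ a₃
  · -- `s` must lie on the path from `c` to `a₂`
    refine Or.inr ⟨⟨{s}, qx⟩, s, rfl, hy1, hy2, hy3, hy4, hsT, ?_⟩
    by_cases hsc : s = c
    · exact Or.inl hsc
    by_cases hca : ConnIn Λ.graph (T \ {s}) c a₂
    swap
    · exact Or.inr (Or.inr hca)
    exfalso
    -- the degree-2 vertex s together with the tripod structure yields a contradiction
    have hsepn : ∀ (z i j : S), z ∈ T → i ∈ T → j ∈ T → Λ.graph.Adj z i →
        Λ.graph.Adj z j → i ≠ j → ¬ ConnIn Λ.graph (S' \ {z}) i j := by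
      intro z i j hz hi hj hzi hzj hij
      refine not_connIn_of_path (A := ⟨i, hTS hi⟩) (B := ⟨j, hTS hj⟩) (sv := ⟨z, hTS hz⟩)
        htree.IsAcyclic
        (SimpleGraph.Walk.cons (show (Λ.graph.induce S').Adj ⟨i, hTS hi⟩ ⟨z, hTS hz⟩ from hzi.symm)
          (SimpleGraph.Walk.cons (show (Λ.graph.induce S').Adj ⟨z, hTS hz⟩ ⟨j, hTS hj⟩ from hzj)
            SimpleGraph.Walk.nil)) ?_ ?_ hzi.ne' hzj.ne'
      · rw [SimpleGraph.Walk.cons_isPath_iff, SimpleGraph.Walk.cons_isPath_iff]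
        refine ⟨⟨SimpleGraph.Walk.IsPath.nil, by simp [Subtype.ext_iff, hzj.ne]⟩, ?_⟩
        simp [Subtype.ext_iff, hzi.ne', hij]
      · simp [SimpleGraph.Walk.support_cons]
    have hcT : c ∈ T := htri.2.1
    -- the three neighbours of c
    obtain ⟨n₁, n₂, n₃, hn12, hn13, hn23, hset3⟩ := Set.ncard_eq_three.mp htri.2.2.1
    have hn1 : n₁ ∈ T ∧ Λ.graph.Adj c n₁ := by
      have : n₁ ∈ {u : S | u ∈ T ∧ Λ.graph.Adj c u} := by rw [hset3]; simp
      exact this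
    have hn2 : n₂ ∈ T ∧ Λ.graph.Adj c n₂ := by
      have : n₂ ∈ {u : S | u ∈ T ∧ Λ.graph.Adj c u} := by rw [hset3]; simp
      exact this
    have hn3 : n₃ ∈ T ∧ Λ.graph.Adj c n₃ := by
      have : n₃ ∈ {u : S | u ∈ T ∧ Λ.graph.Adj c u} := by rw [hset3]; simp
      exact this
    obtain ⟨ℓ₁, hdL1, hc1⟩ := ext_leaf Λ T htri.1 ⟨c, hcT⟩ ⟨n₁, hn1.1⟩ hn1.2
    obtain ⟨ℓ₂, hdL2, hc2⟩ := ext_leaf Λ T htri.1 ⟨c, hcT⟩ ⟨n₂, hn2.1⟩ hn2.2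
    obtain ⟨ℓ₃, hdL3, hc3⟩ := ext_leaf Λ T htri.1 ⟨c, hcT⟩ ⟨n₃, hn3.1⟩ hn3.2
    have hTc : T \ {c} ⊆ S' \ {c} := fun t ht => ⟨hTS ht.1, ht.2⟩
    have P12 : ¬ ConnIn Λ.graph (S' \ {c}) ↑ℓ₁ ↑ℓ₂ := fun h =>
      hsepn c n₁ n₂ hcT hn1.1 hn2.1 hn1.2 hn2.2 hn12
        (((connIn_mono hTc hc1).trans h).trans (connIn_symm (connIn_mono hTc hc2)))
    have P13 : ¬ ConnIn Λ.graph (S' \ {c}) ↑ℓ₁ ↑ℓ₃ := fun h =>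
      hsepn c n₁ n₃ hcT hn1.1 hn3.1 hn1.2 hn3.2 hn13
        (((connIn_mono hTc hc1).trans h).trans (connIn_symm (connIn_mono hTc hc3)))
    have P23 : ¬ ConnIn Λ.graph (S' \ {c}) ↑ℓ₂ ↑ℓ₃ := fun h =>
      hsepn c n₂ n₃ hcT hn2.1 hn3.1 hn2.2 hn3.2 hn23
        (((connIn_mono hTc hc2).trans h).trans (connIn_symm (connIn_mono hTc hc3)))
    have P21 : ¬ ConnIn Λ.graph (S' \ {c}) ↑ℓ₂ ↑ℓ₁ := fun h => P12 (connIn_symm h)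
    have P31 : ¬ ConnIn Λ.graph (S' \ {c}) ↑ℓ₃ ↑ℓ₁ := fun h => P13 (connIn_symm h)
    have P32 : ¬ ConnIn Λ.graph (S' \ {c}) ↑ℓ₃ ↑ℓ₂ := fun h => P23 (connIn_symm h)
    have hne12 : (ℓ₁ : S) ≠ ↑ℓ₂ := fun h => P12 (h ▸ Relation.ReflTransGen.refl)
    have hne13 : (ℓ₁ : S) ≠ ↑ℓ₃ := fun h => P13 (h ▸ Relation.ReflTransGen.refl)
    have hne23 : (ℓ₂ : S) ≠ ↑ℓ₃ := fun h => P23 (h ▸ Relation.ReflTransGen.refl)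
    have hL1 := hleaves _ ℓ₁.2 hdL1
    have hL2 := hleaves _ ℓ₂.2 hdL2
    have hL3 := hleaves _ ℓ₃.2 hdL3
    have hsepc : ¬ ConnIn Λ.graph (S' \ {c}) a₁ a₃ := by
      intro hcon
      rcases hL1 with h1 | h1 | h1 <;> rcases hL2 with h2 | h2 | h2 <;>
        rcases hL3 with h3 | h3 | h3 <;>
        first
          | exact hne12 (h1.trans h2.symm)
          | exact hne13 (h1.trans h3.symm)
          | exact hne23 (h2.trans h3.symm)
          | (rw [← h1, ← h2] at hcon; exact P12 hcon)
          | (rw [← h1, ← h3] at hcon; exact P13 hcon)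
          | (rw [← h2, ← h1] at hcon; exact P21 hcon)
          | (rw [← h2, ← h3] at hcon; exact P23 hcon)
          | (rw [← h3, ← h1] at hcon; exact P31 hcon)
          | (rw [← h3, ← h2] at hcon; exact P32 hcon)
    have hc1s : ConnIn Λ.graph (S' \ {s}) a₁ c := by
      rcases connIn_pass (z := c) hsep with h | h
      · exact absurd (connIn_mono (show (S' \ {s}) \ {c} ⊆ S' \ {c} from
          fun t ht => ⟨ht.1.1, ht.2⟩) h) hsepc
      · exact h
    -- degree of s is two
    have hdeg2 : degIn Λ T s = 2 := by
      rcases htri.2.2.2 s hsT hsc with h | h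
      · rcases hleaves s hsT h with rfl | rfl | rfl
        · exact absurd rfl hs1
        · exact absurd rfl hs2
        · exact absurd rfl hs3
      · exact h
    obtain ⟨p, q, hpq, hset2⟩ := Set.ncard_eq_two.mp
      (show {u : S | u ∈ T ∧ Λ.graph.Adj s u}.ncard = 2 from hdeg2)
    have hp : p ∈ T ∧ Λ.graph.Adj s p := by
      have : p ∈ {u : S | u ∈ T ∧ Λ.graph.Adj s u} := by rw [hset2]; simp
      exact this
    have hq : q ∈ T ∧ Λ.graph.Adj s q := by
      have : q ∈ {u : S | u ∈ T ∧ Λ.graph.Adj s u} := by rw [hset2]; simp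
      exact this
    obtain ⟨ℓp, hdLp, hcp⟩ := ext_leaf Λ T htri.1 ⟨s, hsT⟩ ⟨p, hp.1⟩ hp.2
    obtain ⟨ℓq, hdLq, hcq⟩ := ext_leaf Λ T htri.1 ⟨s, hsT⟩ ⟨q, hq.1⟩ hq.2
    have hsep_pq : ¬ ConnIn Λ.graph (S' \ {s}) p q :=
      hsepn s p q hsT hp.1 hq.1 hp.2 hq.2 hpq
    have hTsub : T \ {s} ⊆ S' \ {s} := fun t ht => ⟨hTS ht.1, ht.2⟩
    have hRa : ∀ t : S, (t = a₁ ∨ t = a₂ ∨ t = a₃) → ConnIn Λ.graph (S' \ {s}) a₁ t := by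
      intro t ht
      rcases ht with rfl | rfl | rfl
      · exact Relation.ReflTransGen.refl
      · exact hc1s.trans (connIn_mono hTsub hca)
      · exact hsep
    apply hsep_pq
    exact ((connIn_mono hTsub hcp).trans (connIn_symm (hRa _ (hleaves _ ℓp.2 hdLp)))).trans
      ((hRa _ (hleaves _ ℓq.2 hdLq)).trans (connIn_symm (connIn_mono hTsub hcq)))
  · -- `s` separates `a₁` from `a₃` : the cosets of `x₁` and `x₃` meet
    exfalso
    apply hpm13
    have hbig : ¬ ConnIn Λ.graph {x : S | x ≠ s} a₁ a₃ := by
      intro h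
      exact hsep (connIn_mono (show {x : S | x ∈ S' ∧ x ≠ s} ⊆ S' \ {s} from
          fun t ht => ⟨ht.1, ht.2⟩)
        (hadm s hsS' a₁ (hTS ha₁) a₃ (hTS ha₃) (Ne.symm hs1) (Ne.symm hs3) h))
    have hgen : ∀ u' ∈ {t : S | t ≠ s ∧ ConnIn Λ.graph {x : S | x ≠ s} a₁ t},
        ∀ v' ∈ {t : S | t ≠ s ∧ ¬ ConnIn Λ.graph {x : S | x ≠ s} a₁ t},
        Commute (Λ.gen u') (Λ.gen v') := by
      intro u' hu' v' hv'
      apply commute_gen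
      by_contra hM2
      have hne : u' ≠ v' := fun h => hv'.2 (h ▸ hu'.2)
      exact hv'.2 (hu'.2.tail ⟨hu'.1, hv'.1, hne, hM2⟩)
    have himg : ∀ a ∈ Λ.gen '' {t : S | t ≠ s ∧ ConnIn Λ.graph {x : S | x ≠ s} a₁ t},
        ∀ b ∈ Λ.gen '' {t : S | t ≠ s ∧ ¬ ConnIn Λ.graph {x : S | x ≠ s} a₁ t},
        Commute a b := by
      rintro _ ⟨u', hu', rfl⟩ _ ⟨v', hv', rfl⟩
      exact hgen u' hu' v' hv'
    have hsets : ({s}ᶜ : Set S) =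
        {t : S | t ≠ s ∧ ConnIn Λ.graph {x : S | x ≠ s} a₁ t} ∪
        {t : S | t ≠ s ∧ ¬ ConnIn Λ.graph {x : S | x ≠ s} a₁ t} := by
      ext t
      constructor
      · intro ht
        by_cases hc' : ConnIn Λ.graph {x : S | x ≠ s} a₁ t
        · exact Or.inl ⟨ht, hc'⟩
        · exact Or.inr ⟨ht, hc'⟩
      · rintro (⟨h, _⟩ | ⟨h, _⟩) <;> exact h
    have hUV : Λ.gen '' ({s}ᶜ : Set S) =
        Λ.gen '' {t : S | t ≠ s ∧ ConnIn Λ.graph {x : S | x ≠ s} a₁ t} ∪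
        Λ.gen '' {t : S | t ≠ s ∧ ¬ ConnIn Λ.graph {x : S | x ≠ s} a₁ t} := by
      rw [hsets, Set.image_union]
    obtain ⟨g1, hg1x, hg1⟩ := hy1.2
    obtain ⟨g3, hg3x, hg3⟩ := hy3.2
    have hmem : g1⁻¹ * g3 ∈ Λ.parab ({s} : Set S)ᶜ :=
      QuotientGroup.eq.mp (hg1x.trans hg3x.symm)
    have hmem' : g1⁻¹ * g3 ∈ Subgroup.closure
        (Λ.gen '' {t : S | t ≠ s ∧ ConnIn Λ.graph {x : S | x ≠ s} a₁ t} ∪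
         Λ.gen '' {t : S | t ≠ s ∧ ¬ ConnIn Λ.graph {x : S | x ≠ s} a₁ t}) := by
      rw [← hUV]; exact hmem
    obtain ⟨u, hu, v, hv, huv⟩ := closure_union_decomp himg _ hmem'
    have hcomm : Commute u v := commute_closure himg u hu v hv
    have hU3 : {t : S | t ≠ s ∧ ConnIn Λ.graph {x : S | x ≠ s} a₁ t} ⊆ ({a₃} : Set S)ᶜ :=
      fun t ht heq => hbig (by
        simp only [Set.mem_singleton_iff] at heq
        exact heq ▸ ht.2)
    have hV1 : {t : S | t ≠ s ∧ ¬ ConnIn Λ.graph {x : S | x ≠ s} a₁ t} ⊆ ({a₁} : Set S)ᶜ := by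
      intro t ht heq
      simp only [Set.mem_singleton_iff] at heq
      subst heq
      exact ht.2 Relation.ReflTransGen.refl
    have hu3 : u ∈ Λ.parab ({a₃} : Set S)ᶜ :=
      Subgroup.closure_mono (Set.image_mono hU3) hu
    have hv1 : v ∈ Λ.parab ({a₁} : Set S)ᶜ :=
      Subgroup.closure_mono (Set.image_mono hV1) hv
    refine ⟨g1 * v, ?_, ?_⟩
    · rw [QuotientGroup.mk_mul_of_mem g1 hv1]; exact hg1
    · have hg3e : g3 = g1 * (u * v) := by rw [← huv]; group
      have key : g3⁻¹ * (g1 * v) = u⁻¹ := by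
        have h1 : g3⁻¹ * (g1 * v) = v⁻¹ * u⁻¹ * v := by rw [hg3e]; group
        rw [h1, mul_assoc, hcomm.inv_left.eq, inv_mul_cancel_left]
      have hfin : (QuotientGroup.mk (g1 * v) : ArtinGroup Λ ⧸ Λ.parab ({a₃} : Set S)ᶜ) =
          QuotientGroup.mk g3 := by
        symm
        rw [QuotientGroup.eq, key]
        exact inv_mem hu3
      exact hfin.trans hg3
end

section
/- Let Λ be a Coxeter diagram containing an admissible D₃-like subdiagram Λ′ whose three consecutive vertices are b₁, b₃, b₂. Suppose the vertex set of Δ_{Λ,Λ′}, with the partial order induced by b₁ < b₃ < b₂, is bowtie free. Then Δ_{Λ,Λ′} is weakly flag if and only if the (b₁,b₂)-subdivision of Δ_{Λ,Λ′} is downward flag. -/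
open scoped Pointwise

open CoxDiagram

namespace CoxDiagram

variable {S : Type*}

/-- `v` is a vertex of the relative Artin complex `Δ_{Λ,Λ′}` for the `D₃`-like subdiagram
with consecutive vertices `b 1, b 3, b 2`. -/
def D3Ok {Λ : CoxDiagram S} (b : ℕ → S) (v : PVertex Λ) : Prop :=
  v.1 = {b 1} ∨ v.1 = {b 2} ∨ v.1 = {b 3}

/-- The partial order on the vertex set of `Δ_{Λ,Λ′}` induced by `b 1 < b 3 < b 2`:
`v < w` iff `v` and `w` are adjacent (their cosets meet) and the type of `v` precedes the
type of `w` in the order `b 1 < b 3 < b 2`. -/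
def d3Lt {Λ : CoxDiagram S} (b : ℕ → S) (v w : PVertex Λ) : Prop :=
  pmeets v w ∧
    ((v.1 = {b 1} ∧ (w.1 = {b 3} ∨ w.1 = {b 2})) ∨ (v.1 = {b 3} ∧ w.1 = {b 2}))

end CoxDiagram

section AuxBasic

namespace CoxDiagram

variable {S : Type*} {Λ : CoxDiagram S}

lemma parab_mono {T T' : Set S} (h : T ⊆ T') : Λ.parab T ≤ Λ.parab T' :=
  Subgroup.closure_mono (Set.image_mono h)

lemma pmeets_symm {v w : PVertex Λ} (h : pmeets v w) : pmeets w v := by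
  obtain ⟨g, h1, h2⟩ := h; exact ⟨g, h2, h1⟩

lemma sne {x y : S} (h : x ≠ y) {A : Set S} (h1 : A = {x}) (h2 : A = {y}) : False :=
  h (Set.singleton_eq_singleton_iff.mp (h1.symm.trans h2))

lemma mem_of_pair_eq {x a c : S} (h : ({a, c} : Set S) = {x}) : a = x ∧ c = x := by
  constructor
  · have : a ∈ ({a, c} : Set S) := Set.mem_insert _ _
    rwa [h, Set.mem_singleton_iff] at this
  · have : c ∈ ({a, c} : Set S) := Set.mem_insert_iff.mpr (Or.inr rfl)
    rwa [h, Set.mem_singleton_iff] at this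

lemma sneP {x a c : S} (hac : a ≠ c) {A : Set S} (h1 : A = {x}) (h2 : A = ({a, c} : Set S)) :
    False := by
  have := mem_of_pair_eq (h2.symm.trans h1)
  exact hac (this.1.trans this.2.symm)

lemma eq_of_pmeets_same : ∀ {v w : PVertex Λ}, v.1 = w.1 → pmeets v w → v = w := by
  rintro ⟨T, c⟩ ⟨T', c'⟩ h hm
  dsimp at h
  subst h
  obtain ⟨g, h1, h2⟩ := hm
  exact congrArg (Sigma.mk T) (h1.symm.trans h2)

lemma mid_absorb {v m w : PVertex Λ} {a c : S} (hv : v.1 = {a}) (hm : m.1 = ({a, c} : Set S))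
    (h1 : pmeets v m) (h2 : pmeets m w) : pmeets v w := by
  obtain ⟨h, hh1, hh2⟩ := h1
  obtain ⟨g, hg1, hg2⟩ := h2
  refine ⟨g, ?_, hg2⟩
  have hmem : h⁻¹ * g ∈ Λ.parab m.1ᶜ := QuotientGroup.eq.mp (hh2.trans hg1.symm)
  have hmem2 : h⁻¹ * g ∈ Λ.parab v.1ᶜ := by
    refine parab_mono ?_ hmem
    rw [hv, hm]
    exact Set.compl_subset_compl.mpr
      (Set.singleton_subset_iff.mpr (Set.mem_insert _ _))
  exact (QuotientGroup.eq.mpr hmem2).symm.trans hh1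

lemma mid_unique {v v' m : PVertex Λ} {a c : S} (hv : v.1 = {a}) (hv' : v'.1 = {a})
    (hm : m.1 = ({a, c} : Set S)) (h1 : pmeets v m) (h2 : pmeets v' m) : v = v' :=
  eq_of_pmeets_same (hv.trans hv'.symm)
    (mid_absorb hv hm h1 (pmeets_symm h2))

end CoxDiagram

end AuxBasic
section AuxTrans

namespace CoxDiagram

variable {S : Type*} {Λ : CoxDiagram S}

lemma gen_comm {s t : S} (h2 : Λ.M s t = 2) : Commute (Λ.gen s) (Λ.gen t) := by
  have hmem : (altWord s t (Λ.M s t) * (altWord t s (Λ.M s t))⁻¹ : FreeGroup S) ∈ artinRels Λ :=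
    ⟨s, t, by rw [h2]; norm_num, rfl⟩
  rw [h2] at hmem
  have e1 : (altWord s t 2 : FreeGroup S) = FreeGroup.of s * (FreeGroup.of t * 1) := rfl
  have e2 : (altWord t s 2 : FreeGroup S) = FreeGroup.of t * (FreeGroup.of s * 1) := rfl
  rw [e1, e2, mul_one, mul_one] at hmem
  have h1 : (QuotientGroup.mk (FreeGroup.of s * FreeGroup.of t *
      (FreeGroup.of t * FreeGroup.of s)⁻¹) :
      PresentedGroup (artinRels Λ)) = 1 :=
    (QuotientGroup.eq_one_iff _).mpr (Subgroup.subset_normalClosure hmem)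
  rw [QuotientGroup.mk_mul, QuotientGroup.mk_inv, QuotientGroup.mk_mul, mul_inv_eq_one] at h1
  exact h1

end CoxDiagram

end AuxTrans
section AuxDecomp

namespace CoxDiagram

variable {S : Type*} {Λ : CoxDiagram S}

lemma decomp {b : ℕ → S} (hD : IsDLike Λ 2 b) (hadm : Admissible Λ (DSet b 2)) :
    ∀ w ∈ Λ.parab (({b 3} : Set S)ᶜ),
      ∃ u ∈ Λ.parab (({b 1} : Set S)ᶜ), ∃ v ∈ Λ.parab (({b 2} : Set S)ᶜ), w = u * v := by
  classical
  obtain ⟨-, hinj, hadj⟩ := hD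
  have hb12 : b 1 ≠ b 2 := fun h => by
    have := hinj 1 2 (by norm_num) (by norm_num) (by norm_num) (by norm_num) h; omega
  have hb13 : b 1 ≠ b 3 := fun h => by
    have := hinj 1 3 (by norm_num) (by norm_num) (by norm_num) (by norm_num) h; omega
  have hb23 : b 2 ≠ b 3 := fun h => by
    have := hinj 2 3 (by norm_num) (by norm_num) (by norm_num) (by norm_num) h; omega
  set C : Set S := {s | s ≠ b 3 ∧ ConnIn Λ.graph {x | x ≠ b 3} s (b 1)} with hCdef
  set D : Set S := {s | s ≠ b 3 ∧ s ∉ C} with hDdef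
  have hb1C : b 1 ∈ C := by rw [hCdef]; exact ⟨hb13, Relation.ReflTransGen.refl⟩
  have hb2C : b 2 ∉ C := by
    rw [hCdef]
    rintro ⟨-, hconn⟩
    have hmem : ∀ i, 1 ≤ i → i ≤ 3 → b i ∈ DSet b 2 := fun i h1 h3 => ⟨i, h1, by omega, rfl⟩
    have hpath := hadm (b 3) (hmem 3 (by norm_num) (by norm_num))
      (b 2) (hmem 2 (by norm_num) (by norm_num)) (b 1) (hmem 1 (by norm_num) (by norm_num))
      hb23 hb13 hconn
    have hreach : ∀ c, ConnIn Λ.graph {x | x ∈ DSet b 2 ∧ x ≠ b 3} (b 2) c → c = b 2 := by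
      intro c hc
      induction hc with
      | refl => rfl
      | tail hab hbc ih =>
        rw [ih] at hbc
        obtain ⟨hmemMid, hmemC, hAdj⟩ := hbc
        obtain ⟨⟨j, hj1, hj3, rfl⟩, hcne⟩ := hmemC
        rw [hadj 2 j (by norm_num) (by norm_num) hj1 hj3] at hAdj
        rcases hAdj with ⟨h, h'⟩ | ⟨h, h'⟩ | ⟨h, h'⟩ | ⟨h, h'⟩ | ⟨h, h'⟩ | ⟨h, h'⟩ <;>
          first
            | omega
            | (exact absurd (by rw [h']) hcne)
    exact hb12 (hreach (b 1) hpath)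
  have hCD : ∀ s ∈ C, ∀ t ∈ D, Commute (Λ.gen s) (Λ.gen t) := by
    intro s hs t ht
    rw [hCdef] at hs
    rw [hDdef] at ht
    have hst : s ≠ t := fun h => ht.2 (by rw [hCdef]; exact h ▸ hs)
    have hnadj : ¬ Λ.graph.Adj t s := by
      intro hAdj
      exact ht.2 (by
        rw [hCdef]
        exact ⟨ht.1, Relation.ReflTransGen.head ⟨ht.1, hs.1, hAdj⟩ hs.2⟩)
    have hM : Λ.M t s = 2 := by
      by_contra hM
      exact hnadj ⟨fun h => hst h.symm, hM⟩
    exact (gen_comm hM).symm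
  have hDC : ∀ u ∈ Subgroup.closure (Λ.gen '' D), ∀ v ∈ Subgroup.closure (Λ.gen '' C),
      Commute u v := by
    have step1 : Subgroup.closure (Λ.gen '' C) ≤ Subgroup.centralizer (Λ.gen '' D) := by
      rw [Subgroup.closure_le]
      rintro x ⟨s, hs, rfl⟩
      rw [SetLike.mem_coe, Subgroup.mem_centralizer_iff]
      rintro g ⟨t, ht, rfl⟩
      exact ((hCD s hs t ht).symm).eq
    have step2 : Subgroup.closure (Λ.gen '' D) ≤
        Subgroup.centralizer ((Subgroup.closure (Λ.gen '' C) : Subgroup (ArtinGroup Λ)) :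
          Set (ArtinGroup Λ)) := by
      rw [Subgroup.closure_le]
      rintro x ⟨t, ht, rfl⟩
      rw [SetLike.mem_coe, Subgroup.mem_centralizer_iff]
      intro g hg
      exact (Subgroup.mem_centralizer_iff.mp (step1 hg) (Λ.gen t) ⟨t, ht, rfl⟩).symm
    intro u hu v hv
    exact (Subgroup.mem_centralizer_iff.mp (step2 hu) v (SetLike.mem_coe.mpr hv)).symm
  intro w hw
  have key : ∃ u ∈ Subgroup.closure (Λ.gen '' D), ∃ v ∈ Subgroup.closure (Λ.gen '' C),
      w = u * v := by
    refine Subgroup.closure_induction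
      (p := fun w _ => ∃ u ∈ Subgroup.closure (Λ.gen '' D),
        ∃ v ∈ Subgroup.closure (Λ.gen '' C), w = u * v) ?_ ?_ ?_ ?_ hw
    · rintro x ⟨s, hs, rfl⟩
      have hs3 : s ≠ b 3 := fun h => hs (by simp [h])
      rcases Classical.em (s ∈ C) with hC | hnC
      · exact ⟨1, one_mem _, Λ.gen s, Subgroup.subset_closure ⟨s, hC, rfl⟩, (one_mul _).symm⟩
      · have hsD : s ∈ D := by rw [hDdef]; exact ⟨hs3, hnC⟩
        exact ⟨Λ.gen s, Subgroup.subset_closure ⟨s, hsD, rfl⟩, 1, one_mem _, (mul_one _).symm⟩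
    · exact ⟨1, one_mem _, 1, one_mem _, (one_mul _).symm⟩
    · rintro x y hx hy ⟨u1, hu1, v1, hv1, rfl⟩ ⟨u2, hu2, v2, hv2, rfl⟩
      refine ⟨u1 * u2, mul_mem hu1 hu2, v1 * v2, mul_mem hv1 hv2, ?_⟩
      have hc : v1 * u2 = u2 * v1 := ((hDC u2 hu2 v1 hv1).symm).eq
      rw [mul_assoc u1 v1, ← mul_assoc v1 u2, hc, mul_assoc u2 v1, ← mul_assoc u1 u2]
    · rintro x hx ⟨u, hu, v, hv, rfl⟩
      refine ⟨u⁻¹, inv_mem hu, v⁻¹, inv_mem hv, ?_⟩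
      rw [mul_inv_rev]
      exact ((hDC u⁻¹ (inv_mem hu) v⁻¹ (inv_mem hv)).symm).eq
  obtain ⟨u, hu, v, hv, rfl⟩ := key
  refine ⟨u, ?_, v, ?_, rfl⟩
  · refine parab_mono ?_ hu
    intro s hsD
    rw [hDdef] at hsD
    exact fun h => hsD.2 (Set.mem_singleton_iff.mp h ▸ hb1C)
  · refine parab_mono ?_ hv
    intro s hsC hmem
    rw [hCdef] at hsC
    exact hb2C (Set.mem_singleton_iff.mp hmem ▸ hsC)

lemma ptrans {b : ℕ → S} (hD : IsDLike Λ 2 b) (hadm : Admissible Λ (DSet b 2))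
    {x z y : PVertex Λ} (hx : x.1 = {b 1}) (hz : z.1 = {b 3}) (hy : y.1 = {b 2})
    (h1 : pmeets x z) (h2 : pmeets z y) : pmeets x y := by
  obtain ⟨g, hg1, hg2⟩ := h1
  obtain ⟨h, hh1, hh2⟩ := h2
  have hmem : g⁻¹ * h ∈ Λ.parab (({b 3} : Set S)ᶜ) := by
    have : g⁻¹ * h ∈ Λ.parab z.1ᶜ := QuotientGroup.eq.mp (hg2.trans hh1.symm)
    rwa [hz] at this
  obtain ⟨u, hu, v, hv, huv⟩ := decomp hD hadm _ hmem
  refine ⟨g * u, ?_, ?_⟩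
  · have hm : g⁻¹ * (g * u) ∈ Λ.parab x.1ᶜ := by
      rw [hx]
      simpa using hu
    exact (QuotientGroup.eq.mpr hm).symm.trans hg1
  · have hm : h⁻¹ * (g * u) ∈ Λ.parab y.1ᶜ := by
      rw [hy]
      have hval : h⁻¹ * (g * u) = v⁻¹ := by
        have hh : h = g * (u * v) := by
          rw [← huv]; group
        rw [hh]; group
      rw [hval]; exact inv_mem hv
    exact (QuotientGroup.eq.mpr hm).symm.trans hh2

end CoxDiagram

end AuxDecomp
section AuxPoset

namespace CoxDiagram

variable {S : Type*} {Λ : CoxDiagram S} {b : ℕ → S}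

lemma d3_pm {v w : PVertex Λ} (h : d3Lt b v w) : pmeets v w := h.1

lemma d3_src {v w : PVertex Λ} (h : d3Lt b v w) : v.1 = {b 1} ∨ v.1 = {b 3} :=
  h.2.elim (fun x => Or.inl x.1) (fun x => Or.inr x.1)

lemma d3_tgt {v w : PVertex Λ} (h : d3Lt b v w) : w.1 = {b 3} ∨ w.1 = {b 2} :=
  h.2.elim (fun x => x.2) (fun x => Or.inr x.2)

lemma d3_mk13 {v w : PVertex Λ} (hv : v.1 = {b 1}) (hw : w.1 = {b 3}) (h : pmeets v w) :
    d3Lt b v w := ⟨h, Or.inl ⟨hv, Or.inl hw⟩⟩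

lemma d3_mk12 {v w : PVertex Λ} (hv : v.1 = {b 1}) (hw : w.1 = {b 2}) (h : pmeets v w) :
    d3Lt b v w := ⟨h, Or.inl ⟨hv, Or.inr hw⟩⟩

lemma d3_mk32 {v w : PVertex Λ} (hv : v.1 = {b 3}) (hw : w.1 = {b 2}) (h : pmeets v w) :
    d3Lt b v w := ⟨h, Or.inr ⟨hv, hw⟩⟩

section Bow

variable (hb12 : b 1 ≠ b 2) (hb13 : b 1 ≠ b 3) (hb23 : b 2 ≠ b 3)
  (hbow : RelBowtieFree (fun v w : {v : PVertex Λ // D3Ok b v} => d3Lt b v.1 w.1))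

include hb12 hb13 hb23 hbow

lemma lemA {X1 X2 Z1 Z2 : {v : PVertex Λ // D3Ok b v}}
    (hX1 : X1.1.1 = {b 1}) (hX2 : X2.1.1 = {b 1}) (hZ1 : Z1.1.1 = {b 3}) (hZ2 : Z2.1.1 = {b 3})
    (hne : X1 ≠ X2) (h11 : pmeets X1.1 Z1.1) (h12 : pmeets X1.1 Z2.1)
    (h21 : pmeets X2.1 Z1.1) (h22 : pmeets X2.1 Z2.1) : Z1 = Z2 := by
  obtain ⟨c, hc1, hc2, hc3, hc4⟩ := hbow X1 Z1 X2 Z2 (d3_mk13 hX1 hZ1 h11) (d3_mk13 hX1 hZ2 h12)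
    (d3_mk13 hX2 hZ1 h21) (d3_mk13 hX2 hZ2 h22)
  rcases hc3 with hlt | heq
  · rcases hlt.2 with ⟨hcb1, -⟩ | ⟨-, hZ1b2⟩
    · rcases hc1 with hlt1 | heq1
      · rcases d3_tgt hlt1 with h | h
        · exact ((sne hb13 hcb1 h).elim)
        · exact ((sne hb12 hcb1 h).elim)
      · rcases hc2 with hlt2 | heq2
        · rcases d3_tgt hlt2 with h | h
          · exact ((sne hb13 hcb1 h).elim)
          · exact ((sne hb12 hcb1 h).elim)
        · exact (hne (heq1.trans heq2.symm)).elim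
    · exact ((sne hb23 hZ1b2 hZ1).elim)
  · rcases hc4 with hlt4 | heq4
    · have hc31 : c.1.1 = {b 3} := by rw [heq]; exact hZ1
      rcases hlt4.2 with ⟨hcb1, -⟩ | ⟨-, hZ2b2⟩
      · exact ((sne hb13 hcb1 hc31).elim)
      · exact ((sne hb23 hZ2b2 hZ2).elim)
    · exact heq.symm.trans heq4

lemma lemC {X1 X2 Z Y : {v : PVertex Λ // D3Ok b v}}
    (hX1 : X1.1.1 = {b 1}) (hX2 : X2.1.1 = {b 1}) (hZ : Z.1.1 = {b 3}) (hY : Y.1.1 = {b 2})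
    (hne : X1 ≠ X2) (h1z : pmeets X1.1 Z.1) (h1y : pmeets X1.1 Y.1)
    (h2z : pmeets X2.1 Z.1) (h2y : pmeets X2.1 Y.1) : pmeets Z.1 Y.1 := by
  obtain ⟨c, hc1, hc2, hc3, hc4⟩ := hbow X1 Z X2 Y (d3_mk13 hX1 hZ h1z) (d3_mk12 hX1 hY h1y)
    (d3_mk13 hX2 hZ h2z) (d3_mk12 hX2 hY h2y)
  rcases hc3 with hlt | heq
  · rcases hlt.2 with ⟨hcb1, -⟩ | ⟨-, hZb2⟩
    · rcases hc1 with hlt1 | heq1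
      · rcases d3_tgt hlt1 with h | h
        · exact ((sne hb13 hcb1 h).elim)
        · exact ((sne hb12 hcb1 h).elim)
      · rcases hc2 with hlt2 | heq2
        · rcases d3_tgt hlt2 with h | h
          · exact ((sne hb13 hcb1 h).elim)
          · exact ((sne hb12 hcb1 h).elim)
        · exact (hne (heq1.trans heq2.symm)).elim
    · exact ((sne hb23 hZb2 hZ).elim)
  · rcases hc4 with hlt4 | heq4
    · have := d3_pm hlt4
      rwa [← heq]
    · have : Z.1.1 = {b 2} := by rw [heq.symm.trans heq4]; exact hY
      exact ((sne hb23 this hZ).elim)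

lemma lemD {Z1 Z2 Y1 Y2 : {v : PVertex Λ // D3Ok b v}}
    (hZ1 : Z1.1.1 = {b 3}) (hZ2 : Z2.1.1 = {b 3}) (hY1 : Y1.1.1 = {b 2}) (hY2 : Y2.1.1 = {b 2})
    (h11 : pmeets Z1.1 Y1.1) (h12 : pmeets Z1.1 Y2.1)
    (h21 : pmeets Z2.1 Y1.1) (h22 : pmeets Z2.1 Y2.1) : Z1 = Z2 ∨ Y1 = Y2 := by
  obtain ⟨c, hc1, hc2, hc3, hc4⟩ := hbow Z1 Y1 Z2 Y2 (d3_mk32 hZ1 hY1 h11) (d3_mk32 hZ1 hY2 h12)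
    (d3_mk32 hZ2 hY1 h21) (d3_mk32 hZ2 hY2 h22)
  rcases hc1 with hlt | heq
  · have hcb2 : c.1.1 = {b 2} := by
      rcases hlt.2 with ⟨hZ1b1, -⟩ | ⟨-, h⟩
      · exact ((sne hb13 hZ1b1 hZ1).elim)
      · exact h
    rcases hc3 with hlt3 | heq3
    · rcases d3_src hlt3 with h | h
      · exact ((sne hb12 h hcb2).elim)
      · exact ((sne hb23 hcb2 h).elim)
    · rcases hc4 with hlt4 | heq4
      · rcases d3_src hlt4 with h | h
        · exact ((sne hb12 h hcb2).elim)
        · exact ((sne hb23 hcb2 h).elim)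
      · exact Or.inr (heq3.symm.trans heq4)
  · rcases hc2 with hlt2 | heq2
    · have hcb2 : c.1.1 = {b 2} := by
        rcases hlt2.2 with ⟨hZ2b1, -⟩ | ⟨-, h⟩
        · exact ((sne hb13 hZ2b1 hZ2).elim)
        · exact h
      have hcb3 : c.1.1 = {b 3} := by rw [← heq]; exact hZ1
      exact ((sne hb23 hcb2 hcb3).elim)
    · exact Or.inl (heq.trans heq2.symm)

lemma lemE {X Z Y1 Y2 : {v : PVertex Λ // D3Ok b v}}
    (hX : X.1.1 = {b 1}) (hZ : Z.1.1 = {b 3}) (hY1 : Y1.1.1 = {b 2}) (hY2 : Y2.1.1 = {b 2})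
    (hne : Y1 ≠ Y2) (hx1 : pmeets X.1 Y1.1) (hx2 : pmeets X.1 Y2.1)
    (hz1 : pmeets Z.1 Y1.1) (hz2 : pmeets Z.1 Y2.1) : pmeets X.1 Z.1 := by
  obtain ⟨c, hc1, hc2, hc3, hc4⟩ := hbow X Y1 Z Y2 (d3_mk12 hX hY1 hx1) (d3_mk12 hX hY2 hx2)
    (d3_mk32 hZ hY1 hz1) (d3_mk32 hZ hY2 hz2)
  rcases hc2 with hlt | heq
  · have hcb2 : c.1.1 = {b 2} := by
      rcases hlt.2 with ⟨hZb1, -⟩ | ⟨-, h⟩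
      · exact ((sne hb13 hZb1 hZ).elim)
      · exact h
    rcases hc3 with hlt3 | heq3
    · rcases d3_src hlt3 with h | h
      · exact ((sne hb12 h hcb2).elim)
      · exact ((sne hb23 hcb2 h).elim)
    · rcases hc4 with hlt4 | heq4
      · rcases d3_src hlt4 with h | h
        · exact ((sne hb12 h hcb2).elim)
        · exact ((sne hb23 hcb2 h).elim)
      · exact (hne (heq3.symm.trans heq4)).elim
  · rcases hc1 with hlt1 | heq1
    · have := d3_pm hlt1
      rwa [← heq] at this
    · have : X.1.1 = {b 3} := by rw [heq1.trans heq.symm]; exact hZ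
      exact ((sne hb13 hX this).elim)

end Bow

section Tau

variable {T : Set S} {k : ℕ}

lemma tau_ge1 (h : subdivTau b 2 T k) : 1 ≤ k := by
  rcases h with ⟨h, -⟩ | ⟨h, -⟩ | ⟨h, -, -⟩ <;> omega

lemma tau_of1 (hb12 : b 1 ≠ b 2) (hb13 : b 1 ≠ b 3) (hT : T = {b 1})
    (h : subdivTau b 2 T k) : k = 1 := by
  rcases h with ⟨hk, -⟩ | ⟨hk, hP⟩ | ⟨hk3, hkn, hks⟩
  · exact hk
  · exact (sneP hb12 hT hP).elim
  · have hk' : k = 3 := by omega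
    rw [hk'] at hks
    exact (sne hb13 hT hks).elim

lemma tau_of2 (hb12 : b 1 ≠ b 2) (hb23 : b 2 ≠ b 3) (hT : T = {b 2})
    (h : subdivTau b 2 T k) : k = 1 := by
  rcases h with ⟨hk, -⟩ | ⟨hk, hP⟩ | ⟨hk3, hkn, hks⟩
  · exact hk
  · exact (sneP hb12 hT hP).elim
  · have hk' : k = 3 := by omega
    rw [hk'] at hks
    exact (sne hb23 hT hks).elim

lemma tau_ofM (hb12 : b 1 ≠ b 2) (hT : T = ({b 1, b 2} : Set S))
    (h : subdivTau b 2 T k) : k = 2 := by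
  rcases h with ⟨hk, hor⟩ | ⟨hk, -⟩ | ⟨hk3, hkn, hks⟩
  · rcases hor with h1 | h1
    · exact (sneP hb12 h1 hT).elim
    · exact (sneP hb12 h1 hT).elim
  · exact hk
  · exact (sneP hb12 hks hT).elim

lemma tau_of3 (hb12 : b 1 ≠ b 2) (hb13 : b 1 ≠ b 3) (hb23 : b 2 ≠ b 3) (hT : T = {b 3})
    (h : subdivTau b 2 T k) : k = 3 := by
  rcases h with ⟨hk, hor⟩ | ⟨hk, hP⟩ | ⟨hk3, hkn, hks⟩
  · rcases hor with h1 | h1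
    · exact (sne hb13 h1 hT).elim
    · exact (sne hb23 h1 hT).elim
  · exact (sneP hb12 hT hP).elim
  · omega

lemma tauI1 (hT : T = {b 1}) : subdivTau b 2 T 1 := Or.inl ⟨rfl, Or.inl hT⟩

lemma tauI2 (hT : T = {b 2}) : subdivTau b 2 T 1 := Or.inl ⟨rfl, Or.inr hT⟩

lemma tauIM (hT : T = ({b 1, b 2} : Set S)) : subdivTau b 2 T 2 := Or.inr (Or.inl ⟨rfl, hT⟩)

lemma tauI3 (hT : T = {b 3}) : subdivTau b 2 T 3 :=
  Or.inr (Or.inr ⟨by norm_num, by norm_num, hT⟩)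

end Tau

section MaxMin

lemma maxB2 (hb12 : b 1 ≠ b 2) (hb23 : b 2 ≠ b 3) {q : {v : PVertex Λ // D3Ok b v}} (hq : q.1.1 = {b 2}) :
    RelMaximalEl (fun v w : {v : PVertex Λ // D3Ok b v} => d3Lt b v.1 w.1) q := by
  intro w hlt
  rcases d3_src hlt with h | h
  · exact sne hb12 h hq
  · exact sne hb23 hq h

lemma minB1 (hb12 : b 1 ≠ b 2) (hb13 : b 1 ≠ b 3) {q : {v : PVertex Λ // D3Ok b v}} (hq : q.1.1 = {b 1}) :
    RelMinimalEl (fun v w : {v : PVertex Λ // D3Ok b v} => d3Lt b v.1 w.1) q := by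
  intro w hlt
  rcases d3_tgt hlt with h | h
  · exact sne hb13 hq h
  · exact sne hb12 hq h

lemma notMax3 {q : {v : PVertex Λ // D3Ok b v}} (hq : q.1.1 = {b 3}) :
    ¬ RelMaximalEl (fun v w : {v : PVertex Λ // D3Ok b v} => d3Lt b v.1 w.1) q := by
  intro hmax
  obtain ⟨g, hg⟩ := QuotientGroup.mk_surjective q.1.2
  exact hmax ⟨⟨{b 2}, QuotientGroup.mk g⟩, Or.inr (Or.inl rfl)⟩
    (d3_mk32 hq rfl ⟨g, hg, rfl⟩)

lemma notMin3 {q : {v : PVertex Λ // D3Ok b v}} (hq : q.1.1 = {b 3}) :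
    ¬ RelMinimalEl (fun v w : {v : PVertex Λ // D3Ok b v} => d3Lt b v.1 w.1) q := by
  intro hmin
  obtain ⟨g, hg⟩ := QuotientGroup.mk_surjective q.1.2
  exact hmin ⟨⟨{b 1}, QuotientGroup.mk g⟩, Or.inl rfl⟩
    (d3_mk13 rfl hq ⟨g, rfl, hg⟩)

end MaxMin

lemma midPi {m : PVertex Λ} (hm : m.1 = ({b 1, b 2} : Set S)) :
    ∃ x y : PVertex Λ, x.1 = {b 1} ∧ y.1 = {b 2} ∧ pmeets x m ∧ pmeets y m ∧ pmeets x y := by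
  obtain ⟨g, hg⟩ := QuotientGroup.mk_surjective m.2
  exact ⟨⟨{b 1}, QuotientGroup.mk g⟩, ⟨{b 2}, QuotientGroup.mk g⟩, rfl, rfl,
    ⟨g, rfl, hg⟩, ⟨g, rfl, hg⟩, ⟨g, rfl, rfl⟩⟩

end CoxDiagram

end AuxPoset
section AuxHelpers

namespace CoxDiagram

variable {S : Type*} {Λ : CoxDiagram S} {b : ℕ → S}

/-- viewing a `D3Ok` vertex or subdivision vertex -/
abbrev PSv (Λ : CoxDiagram S) (b : ℕ → S) := {v : PVertex Λ // D3Ok b v}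

abbrev QSv (Λ : CoxDiagram S) (b : ℕ → S) := {v : PVertex Λ // SubOk b 2 v}

lemma subok_cases (q : QSv Λ b) :
    q.1.1 = ({b 1, b 2} : Set S) ∨ q.1.1 = {b 1} ∨ q.1.1 = {b 2} ∨ q.1.1 = {b 3} := by
  obtain ⟨v, hok | ⟨i, hi1, hi3, hT⟩⟩ := q
  · exact Or.inl hok
  · have : i = 1 ∨ i = 2 ∨ i = 3 := by omega
    rcases this with rfl | rfl | rfl
    · exact Or.inr (Or.inl hT)
    · exact Or.inr (Or.inr (Or.inl hT))
    · exact Or.inr (Or.inr (Or.inr hT))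

lemma tau1_types {T : Set S} (h : subdivTau b 2 T 1) : T = {b 1} ∨ T = {b 2} := by
  rcases h with ⟨-, hor⟩ | ⟨hk, -⟩ | ⟨hk, -, -⟩
  · exact hor
  · omega
  · omega

section WithNe

variable (hb12 : b 1 ≠ b 2) (hb13 : b 1 ≠ b 3) (hb23 : b 2 ≠ b 3)

include hb12 hb13 hb23

lemma mids_LB {m1 m2 : QSv Λ b} (h1 : m1.1.1 = ({b 1, b 2} : Set S))
    (h2 : m2.1.1 = ({b 1, b 2} : Set S)) (hne : m1 ≠ m2)
    (L : ∃ q : QSv Λ b, RelLe (fun v w : QSv Λ b => SubLt b 2 v.1 w.1) q m1 ∧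
      RelLe (fun v w : QSv Λ b => SubLt b 2 v.1 w.1) q m2) :
    ∃ q : QSv Λ b, (q.1.1 = {b 1} ∨ q.1.1 = {b 2}) ∧ pmeets q.1 m1.1 ∧ pmeets q.1 m2.1 := by
  obtain ⟨q, hq1, hq2⟩ := L
  rcases hq1 with hl1 | he1
  · rcases hq2 with hl2 | he2
    · obtain ⟨pm1, k, l, tk, tl, hkl⟩ := hl1
      have hl' : l = 2 := tau_ofM hb12 h1 tl
      have hk1 : k = 1 := by have := tau_ge1 tk; omega
      rw [hk1] at tk
      exact ⟨q, tau1_types tk, pm1, hl2.1⟩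
    · exfalso
      rw [he2] at hl1
      obtain ⟨-, k, l, tk, tl, hkl⟩ := hl1
      have := tau_ofM hb12 h2 tk
      have := tau_ofM hb12 h1 tl
      omega
  · exfalso
    rcases hq2 with hl2 | he2
    · rw [he1] at hl2
      obtain ⟨-, k, l, tk, tl, hkl⟩ := hl2
      have := tau_ofM hb12 h1 tk
      have := tau_ofM hb12 h2 tl
      omega
    · exact hne (he1.symm.trans he2)

lemma midz_LB {m z : QSv Λ b} (hm : m.1.1 = ({b 1, b 2} : Set S)) (hz : z.1.1 = {b 3})
    (L : ∃ q : QSv Λ b, RelLe (fun v w : QSv Λ b => SubLt b 2 v.1 w.1) q m ∧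
      RelLe (fun v w : QSv Λ b => SubLt b 2 v.1 w.1) q z) :
    pmeets m.1 z.1 ∨
      ∃ q : QSv Λ b, (q.1.1 = {b 1} ∨ q.1.1 = {b 2}) ∧ pmeets q.1 m.1 ∧ pmeets q.1 z.1 := by
  obtain ⟨q, hq1, hq2⟩ := L
  rcases hq1 with hl1 | he1
  · rcases hq2 with hl2 | he2
    · obtain ⟨pm1, k, l, tk, tl, hkl⟩ := hl1
      have hl' : l = 2 := tau_ofM hb12 hm tl
      have hk1 : k = 1 := by have := tau_ge1 tk; omega
      rw [hk1] at tk
      exact Or.inr ⟨q, tau1_types tk, pm1, hl2.1⟩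
    · exfalso
      rw [he2] at hl1
      obtain ⟨-, k, l, tk, tl, hkl⟩ := hl1
      have := tau_of3 hb12 hb13 hb23 hz tk
      have := tau_ofM hb12 hm tl
      omega
  · rw [he1] at hq2
    rcases hq2 with hl2 | he2
    · exact Or.inl hl2.1
    · exfalso
      rw [he2] at hm
      exact sneP hb12 hz hm

lemma zz_LB {z1 z2 : QSv Λ b} (h1 : z1.1.1 = {b 3}) (h2 : z2.1.1 = {b 3}) (hne : z1 ≠ z2)
    (L : ∃ q : QSv Λ b, RelLe (fun v w : QSv Λ b => SubLt b 2 v.1 w.1) q z1 ∧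
      RelLe (fun v w : QSv Λ b => SubLt b 2 v.1 w.1) q z2) :
    (∃ v : PVertex Λ, v.1 = {b 1} ∧ pmeets v z1.1 ∧ pmeets v z2.1) ∨
      (∃ v : PVertex Λ, v.1 = {b 2} ∧ pmeets v z1.1 ∧ pmeets v z2.1) := by
  obtain ⟨q, hq1, hq2⟩ := L
  rcases hq1 with hl1 | he1
  · rcases hq2 with hl2 | he2
    · rcases subok_cases q with hmid | hq1' | hq2' | hq3'
      · obtain ⟨x, y, hx, hy, hxm, hym, hxy⟩ := midPi hmid
        exact Or.inl ⟨x, hx, mid_absorb hx hmid hxm hl1.1, mid_absorb hx hmid hxm hl2.1⟩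
      · exact Or.inl ⟨q.1, hq1', hl1.1, hl2.1⟩
      · exact Or.inr ⟨q.1, hq2', hl1.1, hl2.1⟩
      · exfalso
        obtain ⟨-, k, l, tk, tl, hkl⟩ := hl1
        have := tau_of3 hb12 hb13 hb23 hq3' tk
        have := tau_of3 hb12 hb13 hb23 h1 tl
        omega
    · exfalso
      rw [he2] at hl1
      obtain ⟨-, k, l, tk, tl, hkl⟩ := hl1
      have := tau_of3 hb12 hb13 hb23 h2 tk
      have := tau_of3 hb12 hb13 hb23 h1 tl
      omega
  · exfalso
    rw [he1] at hq2
    rcases hq2 with hl2 | he2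
    · obtain ⟨-, k, l, tk, tl, hkl⟩ := hl2
      have := tau_of3 hb12 hb13 hb23 h1 tk
      have := tau_of3 hb12 hb13 hb23 h2 tl
      omega
    · exact hne (he2 ▸ rfl)

end WithNe

end CoxDiagram

end AuxHelpers
section AuxCores

namespace CoxDiagram

variable {S : Type*} {Λ : CoxDiagram S} {b : ℕ → S}

lemma qsOfTau1 (v : PVertex Λ) (hv : v.1 = {b 1} ∨ v.1 = {b 2}) : SubOk b 2 v := by
  rcases hv with h | h
  · exact Or.inr ⟨1, le_refl 1, by norm_num, h⟩
  · exact Or.inr ⟨2, by norm_num, by norm_num, h⟩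

lemma slt_tau1 {v : PVertex Λ} {p : QSv Λ b} (hv : v.1 = {b 1} ∨ v.1 = {b 2})
    (hp : p.1.1 = ({b 1, b 2} : Set S) ∨ p.1.1 = {b 3}) (hpm : pmeets v p.1) :
    SubLt b 2 v p.1 := by
  refine ⟨hpm, 1, ?_⟩
  rcases hp with h | h
  · exact ⟨2, hv.elim tauI1 tauI2, tauIM h, one_lt_two⟩
  · exact ⟨3, hv.elim tauI1 tauI2, tauI3 h, by norm_num⟩

section Cores

variable (hb12 : b 1 ≠ b 2) (hb13 : b 1 ≠ b 3) (hb23 : b 2 ≠ b 3)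
  (hD : IsDLike Λ 2 b) (hadm : Admissible Λ (DSet b 2))
  (hbow : RelBowtieFree (fun v w : {v : PVertex Λ // D3Ok b v} => d3Lt b v.1 w.1))

include hb12 hb13 hb23

lemma core_mmm {m1 m2 m3 : QSv Λ b}
    (h1 : m1.1.1 = ({b 1, b 2} : Set S)) (h2 : m2.1.1 = ({b 1, b 2} : Set S))
    (h3 : m3.1.1 = ({b 1, b 2} : Set S))
    (e12 : m1 ≠ m2) (e13 : m1 ≠ m3) (e23 : m2 ≠ m3)
    (L12 : ∃ q : QSv Λ b, RelLe (fun v w : QSv Λ b => SubLt b 2 v.1 w.1) q m1 ∧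
      RelLe (fun v w : QSv Λ b => SubLt b 2 v.1 w.1) q m2)
    (L13 : ∃ q : QSv Λ b, RelLe (fun v w : QSv Λ b => SubLt b 2 v.1 w.1) q m1 ∧
      RelLe (fun v w : QSv Λ b => SubLt b 2 v.1 w.1) q m3)
    (L23 : ∃ q : QSv Λ b, RelLe (fun v w : QSv Λ b => SubLt b 2 v.1 w.1) q m2 ∧
      RelLe (fun v w : QSv Λ b => SubLt b 2 v.1 w.1) q m3) :
    ∃ q : QSv Λ b, RelLe (fun v w : QSv Λ b => SubLt b 2 v.1 w.1) q m1 ∧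
      RelLe (fun v w : QSv Λ b => SubLt b 2 v.1 w.1) q m2 ∧
      RelLe (fun v w : QSv Λ b => SubLt b 2 v.1 w.1) q m3 := by
  obtain ⟨q12, c12, p12a, p12b⟩ := mids_LB hb12 hb13 hb23 h1 h2 e12 L12
  obtain ⟨q13, c13, p13a, p13b⟩ := mids_LB hb12 hb13 hb23 h1 h3 e13 L13
  obtain ⟨q23, c23, p23a, p23b⟩ := mids_LB hb12 hb13 hb23 h2 h3 e23 L23
  have done : ∀ v : PVertex Λ, (v.1 = {b 1} ∨ v.1 = {b 2}) →
      pmeets v m1.1 → pmeets v m2.1 → pmeets v m3.1 →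
      ∃ q : QSv Λ b, RelLe (fun v w : QSv Λ b => SubLt b 2 v.1 w.1) q m1 ∧
        RelLe (fun v w : QSv Λ b => SubLt b 2 v.1 w.1) q m2 ∧
        RelLe (fun v w : QSv Λ b => SubLt b 2 v.1 w.1) q m3 :=
    fun v hv a1 a2 a3 => ⟨⟨v, qsOfTau1 v hv⟩, Or.inl (slt_tau1 hv (Or.inl h1) a1),
      Or.inl (slt_tau1 hv (Or.inl h2) a2), Or.inl (slt_tau1 hv (Or.inl h3) a3)⟩
  rcases c12 with c12 | c12 <;> rcases c23 with c23 | c23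
  · exact done q12.1 (Or.inl c12) p12a p12b
      (by rw [mid_unique c12 c23 h2 p12b p23a]; exact p23b)
  · rcases c13 with c13 | c13
    · exact done q13.1 (Or.inl c13) p13a
        (by rw [mid_unique c13 c12 h1 p13a p12a]; exact p12b) p13b
    · have hmu := mid_unique c13 c23
        (show m3.1.1 = ({b 2, b 1} : Set S) by rw [h3, Set.pair_comm]) p13b p23b
      exact done q13.1 (Or.inr c13) p13a (by rw [hmu]; exact p23a) p13b
  · rcases c13 with c13 | c13
    · exact done q13.1 (Or.inl c13) p13a
        (by rw [mid_unique c13 c23 h3 p13b p23b]; exact p23a) p13b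
    · have hmu := mid_unique c13 c12
        (show m1.1.1 = ({b 2, b 1} : Set S) by rw [h1, Set.pair_comm]) p13a p12a
      exact done q13.1 (Or.inr c13) p13a (by rw [hmu]; exact p12b) p13b
  · have hmu := mid_unique c12 c23
      (show m2.1.1 = ({b 2, b 1} : Set S) by rw [h2, Set.pair_comm]) p12b p23a
    exact done q12.1 (Or.inr c12) p12a p12b (by rw [hmu]; exact p23b)

include hD hadm hbow

lemma core_mmz {m1 m2 z : QSv Λ b}
    (h1 : m1.1.1 = ({b 1, b 2} : Set S)) (h2 : m2.1.1 = ({b 1, b 2} : Set S))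
    (hz : z.1.1 = {b 3}) (e12 : m1 ≠ m2)
    (L12 : ∃ q : QSv Λ b, RelLe (fun v w : QSv Λ b => SubLt b 2 v.1 w.1) q m1 ∧
      RelLe (fun v w : QSv Λ b => SubLt b 2 v.1 w.1) q m2)
    (L1z : ∃ q : QSv Λ b, RelLe (fun v w : QSv Λ b => SubLt b 2 v.1 w.1) q m1 ∧
      RelLe (fun v w : QSv Λ b => SubLt b 2 v.1 w.1) q z)
    (L2z : ∃ q : QSv Λ b, RelLe (fun v w : QSv Λ b => SubLt b 2 v.1 w.1) q m2 ∧
      RelLe (fun v w : QSv Λ b => SubLt b 2 v.1 w.1) q z) :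
    ∃ q : QSv Λ b, RelLe (fun v w : QSv Λ b => SubLt b 2 v.1 w.1) q m1 ∧
      RelLe (fun v w : QSv Λ b => SubLt b 2 v.1 w.1) q m2 ∧
      RelLe (fun v w : QSv Λ b => SubLt b 2 v.1 w.1) q z := by
  obtain ⟨q0, c0, p0a, p0b⟩ := mids_LB hb12 hb13 hb23 h1 h2 e12 L12
  have done : ∀ v : PVertex Λ, (v.1 = {b 1} ∨ v.1 = {b 2}) →
      pmeets v m1.1 → pmeets v m2.1 → pmeets v z.1 →
      ∃ q : QSv Λ b, RelLe (fun v w : QSv Λ b => SubLt b 2 v.1 w.1) q m1 ∧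
        RelLe (fun v w : QSv Λ b => SubLt b 2 v.1 w.1) q m2 ∧
        RelLe (fun v w : QSv Λ b => SubLt b 2 v.1 w.1) q z :=
    fun v hv a1 a2 a3 => ⟨⟨v, qsOfTau1 v hv⟩, Or.inl (slt_tau1 hv (Or.inl h1) a1),
      Or.inl (slt_tau1 hv (Or.inl h2) a2), Or.inl (slt_tau1 hv (Or.inr hz) a3)⟩
  have doneq0 : pmeets q0.1 z.1 →
      ∃ q : QSv Λ b, RelLe (fun v w : QSv Λ b => SubLt b 2 v.1 w.1) q m1 ∧
        RelLe (fun v w : QSv Λ b => SubLt b 2 v.1 w.1) q m2 ∧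
        RelLe (fun v w : QSv Λ b => SubLt b 2 v.1 w.1) q z :=
    fun h => done q0.1 c0 p0a p0b h
  rcases midz_LB hb12 hb13 hb23 h1 hz L1z with hA1 | ⟨r1, c1, r1m, r1z⟩
  · refine doneq0 ?_
    rcases c0 with c | c
    · exact mid_absorb c h1 p0a hA1
    · exact mid_absorb c (show m1.1.1 = ({b 2, b 1} : Set S) by rw [h1, Set.pair_comm]) p0a hA1
  · rcases midz_LB hb12 hb13 hb23 h2 hz L2z with hA2 | ⟨r2, c2, r2m, r2z⟩
    · refine doneq0 ?_
      rcases c0 with c | c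
      · exact mid_absorb c h2 p0b hA2
      · exact mid_absorb c (show m2.1.1 = ({b 2, b 1} : Set S) by rw [h2, Set.pair_comm]) p0b hA2
    · rcases c0 with c0 | c0
      · rcases c1 with c1 | c1
        · exact doneq0 (by rw [← mid_unique c1 c0 h1 r1m p0a]; exact r1z)
        · rcases c2 with c2 | c2
          · exact doneq0 (by rw [← mid_unique c2 c0 h2 r2m p0b]; exact r2z)
          · by_cases hrr : r1 = r2
            · exact done r1.1 (Or.inr c1) r1m (by rw [hrr]; exact r2m) r1z
            · have hne' : (⟨r1.1, Or.inr (Or.inl c1)⟩ : PSv Λ b) ≠ ⟨r2.1, Or.inr (Or.inl c2)⟩ :=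
                fun h => hrr (Subtype.ext (congrArg (fun t : PSv Λ b => t.1) h))
              have hq0r1 : pmeets q0.1 r1.1 := mid_absorb c0 h1 p0a (pmeets_symm r1m)
              have hq0r2 : pmeets q0.1 r2.1 := mid_absorb c0 h2 p0b (pmeets_symm r2m)
              exact doneq0 (lemE hb12 hb13 hb23 hbow (X := ⟨q0.1, Or.inl c0⟩)
                (Z := ⟨z.1, Or.inr (Or.inr hz)⟩) (Y1 := ⟨r1.1, Or.inr (Or.inl c1)⟩)
                (Y2 := ⟨r2.1, Or.inr (Or.inl c2)⟩) c0 hz c1 c2 hne' hq0r1 hq0r2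
                (pmeets_symm r1z) (pmeets_symm r2z))
      · rcases c1 with c1 | c1
        · rcases c2 with c2 | c2
          · by_cases hrr : r1 = r2
            · exact done r1.1 (Or.inl c1) r1m (by rw [hrr]; exact r2m) r1z
            · have hne' : (⟨r1.1, Or.inl c1⟩ : PSv Λ b) ≠ ⟨r2.1, Or.inl c2⟩ :=
                fun h => hrr (Subtype.ext (congrArg (fun t : PSv Λ b => t.1) h))
              have hr1q0 : pmeets r1.1 q0.1 := mid_absorb c1 h1 r1m (pmeets_symm p0a)
              have hr2q0 : pmeets r2.1 q0.1 := mid_absorb c2 h2 r2m (pmeets_symm p0b)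
              exact doneq0 (pmeets_symm (lemC hb12 hb13 hb23 hbow (X1 := ⟨r1.1, Or.inl c1⟩)
                (X2 := ⟨r2.1, Or.inl c2⟩) (Z := ⟨z.1, Or.inr (Or.inr hz)⟩)
                (Y := ⟨q0.1, Or.inr (Or.inl c0)⟩) c1 c2 hz c0 hne' r1z hr1q0 r2z hr2q0))
          · have hmu := mid_unique c2 c0
              (show m2.1.1 = ({b 2, b 1} : Set S) by rw [h2, Set.pair_comm]) r2m p0b
            exact doneq0 (by rw [← hmu]; exact r2z)
        · have hmu := mid_unique c1 c0
            (show m1.1.1 = ({b 2, b 1} : Set S) by rw [h1, Set.pair_comm]) r1m p0a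
          exact doneq0 (by rw [← hmu]; exact r1z)

lemma core_mzz {m z1 z2 : QSv Λ b}
    (hm : m.1.1 = ({b 1, b 2} : Set S)) (h1 : z1.1.1 = {b 3}) (h2 : z2.1.1 = {b 3})
    (e12 : z1 ≠ z2)
    (Lm1 : ∃ q : QSv Λ b, RelLe (fun v w : QSv Λ b => SubLt b 2 v.1 w.1) q m ∧
      RelLe (fun v w : QSv Λ b => SubLt b 2 v.1 w.1) q z1)
    (Lm2 : ∃ q : QSv Λ b, RelLe (fun v w : QSv Λ b => SubLt b 2 v.1 w.1) q m ∧
      RelLe (fun v w : QSv Λ b => SubLt b 2 v.1 w.1) q z2)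
    (L12 : ∃ q : QSv Λ b, RelLe (fun v w : QSv Λ b => SubLt b 2 v.1 w.1) q z1 ∧
      RelLe (fun v w : QSv Λ b => SubLt b 2 v.1 w.1) q z2) :
    ∃ q : QSv Λ b, RelLe (fun v w : QSv Λ b => SubLt b 2 v.1 w.1) q m ∧
      RelLe (fun v w : QSv Λ b => SubLt b 2 v.1 w.1) q z1 ∧
      RelLe (fun v w : QSv Λ b => SubLt b 2 v.1 w.1) q z2 := by
  obtain ⟨xm, ym, hxm, hym, pxm, pym, pxy⟩ := midPi hm
  have done : ∀ v : PVertex Λ, (v.1 = {b 1} ∨ v.1 = {b 2}) →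
      pmeets v m.1 → pmeets v z1.1 → pmeets v z2.1 →
      ∃ q : QSv Λ b, RelLe (fun v w : QSv Λ b => SubLt b 2 v.1 w.1) q m ∧
        RelLe (fun v w : QSv Λ b => SubLt b 2 v.1 w.1) q z1 ∧
        RelLe (fun v w : QSv Λ b => SubLt b 2 v.1 w.1) q z2 :=
    fun v hv a1 a2 a3 => ⟨⟨v, qsOfTau1 v hv⟩, Or.inl (slt_tau1 hv (Or.inl hm) a1),
      Or.inl (slt_tau1 hv (Or.inr h1) a2), Or.inl (slt_tau1 hv (Or.inr h2) a3)⟩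
  have P1 : pmeets xm z1.1 ∨ pmeets ym z1.1 := by
    rcases midz_LB hb12 hb13 hb23 hm h1 Lm1 with hA | ⟨r, c, rm, rz⟩
    · exact Or.inl (mid_absorb hxm hm pxm hA)
    · rcases c with c | c
      · exact Or.inl (by rw [← mid_unique c hxm hm rm pxm]; exact rz)
      · have hmu := mid_unique c hym
          (show m.1.1 = ({b 2, b 1} : Set S) by rw [hm, Set.pair_comm]) rm pym
        exact Or.inr (by rw [← hmu]; exact rz)
  have P2 : pmeets xm z2.1 ∨ pmeets ym z2.1 := by
    rcases midz_LB hb12 hb13 hb23 hm h2 Lm2 with hA | ⟨r, c, rm, rz⟩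
    · exact Or.inl (mid_absorb hxm hm pxm hA)
    · rcases c with c | c
      · exact Or.inl (by rw [← mid_unique c hxm hm rm pxm]; exact rz)
      · have hmu := mid_unique c hym
          (show m.1.1 = ({b 2, b 1} : Set S) by rw [hm, Set.pair_comm]) rm pym
        exact Or.inr (by rw [← hmu]; exact rz)
  have E := zz_LB hb12 hb13 hb23 h1 h2 e12 L12
  have aux : ∀ zA zB : QSv Λ b, zA.1.1 = {b 3} → zB.1.1 = {b 3} →
      pmeets xm zA.1 → pmeets ym zB.1 →
      ((∃ v : PVertex Λ, v.1 = {b 1} ∧ pmeets v zA.1 ∧ pmeets v zB.1) ∨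
        (∃ v : PVertex Λ, v.1 = {b 2} ∧ pmeets v zA.1 ∧ pmeets v zB.1)) →
      pmeets xm zB.1 ∨ pmeets ym zA.1 := by
    intro zA zB hA hB pxA pyB hE
    rcases hE with ⟨x', hx', xA, xB⟩ | ⟨y', hy', yA, yB⟩
    · by_cases hxe : x' = xm
      · rw [hxe] at xB; exact Or.inl xB
      · have hx'y : pmeets x' ym := ptrans hD hadm hx' hB hym xB (pmeets_symm pyB)
        have hne' : (⟨xm, Or.inl hxm⟩ : PSv Λ b) ≠ ⟨x', Or.inl hx'⟩ :=
          fun h => hxe (congrArg Subtype.val h).symm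
        exact Or.inr (pmeets_symm (lemC hb12 hb13 hb23 hbow (X1 := ⟨xm, Or.inl hxm⟩)
          (X2 := ⟨x', Or.inl hx'⟩) (Z := ⟨zA.1, Or.inr (Or.inr hA)⟩)
          (Y := ⟨ym, Or.inr (Or.inl hym)⟩) hxm hx' hA hym hne' pxA pxy xA hx'y))
    · by_cases hye : y' = ym
      · rw [hye] at yA; exact Or.inr yA
      · have hxy' : pmeets xm y' := ptrans hD hadm hxm hA hy' pxA (pmeets_symm yA)
        have hne' : (⟨ym, Or.inr (Or.inl hym)⟩ : PSv Λ b) ≠ ⟨y', Or.inr (Or.inl hy')⟩ :=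
          fun h => hye (congrArg Subtype.val h).symm
        exact Or.inl (lemE hb12 hb13 hb23 hbow (X := ⟨xm, Or.inl hxm⟩)
          (Z := ⟨zB.1, Or.inr (Or.inr hB)⟩) (Y1 := ⟨ym, Or.inr (Or.inl hym)⟩)
          (Y2 := ⟨y', Or.inr (Or.inl hy')⟩) hxm hB hym hy' hne' pxy hxy'
          (pmeets_symm pyB) (pmeets_symm yB))
  rcases P1 with p1 | p1 <;> rcases P2 with p2 | p2
  · exact done xm (Or.inl hxm) pxm p1 p2
  · rcases aux z1 z2 h1 h2 p1 p2 E with h | h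
    · exact done xm (Or.inl hxm) pxm p1 h
    · exact done ym (Or.inr hym) pym h p2
  · have E' : (∃ v : PVertex Λ, v.1 = {b 1} ∧ pmeets v z2.1 ∧ pmeets v z1.1) ∨
        (∃ v : PVertex Λ, v.1 = {b 2} ∧ pmeets v z2.1 ∧ pmeets v z1.1) := by
      rcases E with ⟨v, a, c, d⟩ | ⟨v, a, c, d⟩
      · exact Or.inl ⟨v, a, d, c⟩
      · exact Or.inr ⟨v, a, d, c⟩
    rcases aux z2 z1 h2 h1 p2 p1 E' with h | h
    · exact done xm (Or.inl hxm) pxm h p2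
    · exact done ym (Or.inr hym) pym p1 h
  · exact done ym (Or.inr hym) pym p1 p2

end Cores

end CoxDiagram

end AuxCores
section AuxZZZ

namespace CoxDiagram

variable {S : Type*} {Λ : CoxDiagram S} {b : ℕ → S}

section Cores2

variable (hb12 : b 1 ≠ b 2) (hb13 : b 1 ≠ b 3) (hb23 : b 2 ≠ b 3)
  (hD : IsDLike Λ 2 b) (hadm : Admissible Λ (DSet b 2))
  (hbow : RelBowtieFree (fun v w : {v : PVertex Λ // D3Ok b v} => d3Lt b v.1 w.1))

include hb12 hb13 hb23 hbow

lemma allX (hWUF : RelWeaklyUpwardFlag (fun v w : {v : PVertex Λ // D3Ok b v} => d3Lt b v.1 w.1))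
    {z1 z2 z3 : QSv Λ b} (h1 : z1.1.1 = {b 3}) (h2 : z2.1.1 = {b 3}) (h3 : z3.1.1 = {b 3})
    (e12 : z1 ≠ z2)
    {x12 x13 x23 : PVertex Λ}
    (hx12 : x12.1 = {b 1}) (hx13 : x13.1 = {b 1}) (hx23 : x23.1 = {b 1})
    (p12a : pmeets x12 z1.1) (p12b : pmeets x12 z2.1)
    (p13a : pmeets x13 z1.1) (p13c : pmeets x13 z3.1)
    (p23b : pmeets x23 z2.1) (p23c : pmeets x23 z3.1) :
    ∃ v : PVertex Λ, (v.1 = {b 1} ∨ v.1 = {b 2}) ∧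
      pmeets v z1.1 ∧ pmeets v z2.1 ∧ pmeets v z3.1 := by
  by_cases a : x12 = x13
  · exact ⟨x12, Or.inl hx12, p12a, p12b, by rw [a]; exact p13c⟩
  by_cases b' : x12 = x23
  · exact ⟨x12, Or.inl hx12, p12a, p12b, by rw [b']; exact p23c⟩
  by_cases c' : x13 = x23
  · exact ⟨x13, Or.inl hx13, p13a, by rw [c']; exact p23b, p13c⟩
  obtain ⟨Q, hQ1, hQ2, hQ3⟩ := hWUF ⟨x12, Or.inl hx12⟩ ⟨x13, Or.inl hx13⟩ ⟨x23, Or.inl hx23⟩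
    ⟨⟨z1.1, Or.inr (Or.inr h1)⟩, Or.inl (d3_mk13 hx12 h1 p12a),
      Or.inl (d3_mk13 hx13 h1 p13a), notMax3 h1⟩
    ⟨⟨z3.1, Or.inr (Or.inr h3)⟩, Or.inl (d3_mk13 hx13 h3 p13c),
      Or.inl (d3_mk13 hx23 h3 p23c), notMax3 h3⟩
    ⟨⟨z2.1, Or.inr (Or.inr h2)⟩, Or.inl (d3_mk13 hx12 h2 p12b),
      Or.inl (d3_mk13 hx23 h2 p23b), notMax3 h2⟩
  have l1 : d3Lt b x12 Q.1 := by
    rcases hQ1 with l | e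
    · exact l
    · exfalso
      rcases hQ2 with l' | e'
      · rw [← e] at l'
        rcases d3_tgt l' with h | h
        · exact sne hb13 hx12 h
        · exact sne hb12 hx12 h
      · exact a (congrArg Subtype.val (e'.trans e.symm)).symm
  have l2 : d3Lt b x13 Q.1 := by
    rcases hQ2 with l | e
    · exact l
    · exfalso
      rcases hQ1 with l' | e'
      · rw [← e] at l'
        rcases d3_tgt l' with h | h
        · exact sne hb13 hx13 h
        · exact sne hb12 hx13 h
      · exact a (congrArg Subtype.val (e'.trans e.symm))
  have l3 : d3Lt b x23 Q.1 := by
    rcases hQ3 with l | e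
    · exact l
    · exfalso
      rcases hQ1 with l' | e'
      · rw [← e] at l'
        rcases d3_tgt l' with h | h
        · exact sne hb13 hx23 h
        · exact sne hb12 hx23 h
      · exact b' (congrArg Subtype.val (e'.trans e.symm))
  rcases d3_tgt l1 with hQ3t | hQ2t
  · exfalso
    have eq1 := lemA hb12 hb13 hb23 hbow (X1 := ⟨x12, Or.inl hx12⟩) (X2 := ⟨x13, Or.inl hx13⟩)
      (Z1 := ⟨z1.1, Or.inr (Or.inr h1)⟩) (Z2 := Q) hx12 hx13 h1 hQ3t
      (fun h => a (congrArg Subtype.val h)) p12a (d3_pm l1) p13a (d3_pm l2)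
    have eq2 := lemA hb12 hb13 hb23 hbow (X1 := ⟨x12, Or.inl hx12⟩) (X2 := ⟨x23, Or.inl hx23⟩)
      (Z1 := ⟨z2.1, Or.inr (Or.inr h2)⟩) (Z2 := Q) hx12 hx23 h2 hQ3t
      (fun h => b' (congrArg Subtype.val h)) p12b (d3_pm l1) p23b (d3_pm l3)
    exact e12 (Subtype.ext (congrArg (fun t : PSv Λ b => t.1) (eq1.trans eq2.symm)))
  · have w1 := lemC hb12 hb13 hb23 hbow (X1 := ⟨x12, Or.inl hx12⟩) (X2 := ⟨x13, Or.inl hx13⟩)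
      (Z := ⟨z1.1, Or.inr (Or.inr h1)⟩) (Y := Q) hx12 hx13 h1 hQ2t
      (fun h => a (congrArg Subtype.val h)) p12a (d3_pm l1) p13a (d3_pm l2)
    have w2 := lemC hb12 hb13 hb23 hbow (X1 := ⟨x12, Or.inl hx12⟩) (X2 := ⟨x23, Or.inl hx23⟩)
      (Z := ⟨z2.1, Or.inr (Or.inr h2)⟩) (Y := Q) hx12 hx23 h2 hQ2t
      (fun h => b' (congrArg Subtype.val h)) p12b (d3_pm l1) p23b (d3_pm l3)
    have w3 := lemC hb12 hb13 hb23 hbow (X1 := ⟨x13, Or.inl hx13⟩) (X2 := ⟨x23, Or.inl hx23⟩)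
      (Z := ⟨z3.1, Or.inr (Or.inr h3)⟩) (Y := Q) hx13 hx23 h3 hQ2t
      (fun h => c' (congrArg Subtype.val h)) p13c (d3_pm l2) p23c (d3_pm l3)
    exact ⟨Q.1, Or.inr hQ2t, pmeets_symm w1, pmeets_symm w2, pmeets_symm w3⟩

lemma allY (hWDF : RelWeaklyDownwardFlag (fun v w : {v : PVertex Λ // D3Ok b v} => d3Lt b v.1 w.1))
    {z1 z2 z3 : QSv Λ b} (h1 : z1.1.1 = {b 3}) (h2 : z2.1.1 = {b 3}) (h3 : z3.1.1 = {b 3})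
    (e12 : z1 ≠ z2)
    {y12 y13 y23 : PVertex Λ}
    (hy12 : y12.1 = {b 2}) (hy13 : y13.1 = {b 2}) (hy23 : y23.1 = {b 2})
    (p12a : pmeets y12 z1.1) (p12b : pmeets y12 z2.1)
    (p13a : pmeets y13 z1.1) (p13c : pmeets y13 z3.1)
    (p23b : pmeets y23 z2.1) (p23c : pmeets y23 z3.1) :
    ∃ v : PVertex Λ, (v.1 = {b 1} ∨ v.1 = {b 2}) ∧
      pmeets v z1.1 ∧ pmeets v z2.1 ∧ pmeets v z3.1 := by
  by_cases a : y12 = y13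
  · exact ⟨y12, Or.inr hy12, p12a, p12b, by rw [a]; exact p13c⟩
  by_cases b' : y12 = y23
  · exact ⟨y12, Or.inr hy12, p12a, p12b, by rw [b']; exact p23c⟩
  by_cases c' : y13 = y23
  · exact ⟨y13, Or.inr hy13, p13a, by rw [c']; exact p23b, p13c⟩
  obtain ⟨Q, hQ1, hQ2, hQ3⟩ := hWDF ⟨y12, Or.inr (Or.inl hy12)⟩ ⟨y13, Or.inr (Or.inl hy13)⟩
    ⟨y23, Or.inr (Or.inl hy23)⟩
    ⟨⟨z1.1, Or.inr (Or.inr h1)⟩, Or.inl (d3_mk32 h1 hy12 (pmeets_symm p12a)),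
      Or.inl (d3_mk32 h1 hy13 (pmeets_symm p13a)), notMin3 h1⟩
    ⟨⟨z3.1, Or.inr (Or.inr h3)⟩, Or.inl (d3_mk32 h3 hy13 (pmeets_symm p13c)),
      Or.inl (d3_mk32 h3 hy23 (pmeets_symm p23c)), notMin3 h3⟩
    ⟨⟨z2.1, Or.inr (Or.inr h2)⟩, Or.inl (d3_mk32 h2 hy12 (pmeets_symm p12b)),
      Or.inl (d3_mk32 h2 hy23 (pmeets_symm p23b)), notMin3 h2⟩
  have l1 : d3Lt b Q.1 y12 := by
    rcases hQ1 with l | e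
    · exact l
    · exfalso
      rcases hQ2 with l' | e'
      · rw [e] at l'
        rcases d3_src l' with h | h
        · exact sne hb12 h hy12
        · exact sne hb23 hy12 h
      · exact a (congrArg Subtype.val (e.symm.trans e'))
  have l2 : d3Lt b Q.1 y13 := by
    rcases hQ2 with l | e
    · exact l
    · exfalso
      rcases hQ1 with l' | e'
      · rw [e] at l'
        rcases d3_src l' with h | h
        · exact sne hb12 h hy13
        · exact sne hb23 hy13 h
      · exact a (congrArg Subtype.val (e'.symm.trans e))
  have l3 : d3Lt b Q.1 y23 := by
    rcases hQ3 with l | e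
    · exact l
    · exfalso
      rcases hQ1 with l' | e'
      · rw [e] at l'
        rcases d3_src l' with h | h
        · exact sne hb12 h hy23
        · exact sne hb23 hy23 h
      · exact b' (congrArg Subtype.val (e'.symm.trans e))
  rcases d3_src l1 with hQ1t | hQ3t
  · have w1 := lemE hb12 hb13 hb23 hbow (X := Q) (Z := ⟨z1.1, Or.inr (Or.inr h1)⟩)
      (Y1 := ⟨y12, Or.inr (Or.inl hy12)⟩) (Y2 := ⟨y13, Or.inr (Or.inl hy13)⟩)
      hQ1t h1 hy12 hy13 (fun h => a (congrArg Subtype.val h)) (d3_pm l1) (d3_pm l2)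
      (pmeets_symm p12a) (pmeets_symm p13a)
    have w2 := lemE hb12 hb13 hb23 hbow (X := Q) (Z := ⟨z2.1, Or.inr (Or.inr h2)⟩)
      (Y1 := ⟨y12, Or.inr (Or.inl hy12)⟩) (Y2 := ⟨y23, Or.inr (Or.inl hy23)⟩)
      hQ1t h2 hy12 hy23 (fun h => b' (congrArg Subtype.val h)) (d3_pm l1) (d3_pm l3)
      (pmeets_symm p12b) (pmeets_symm p23b)
    have w3 := lemE hb12 hb13 hb23 hbow (X := Q) (Z := ⟨z3.1, Or.inr (Or.inr h3)⟩)
      (Y1 := ⟨y13, Or.inr (Or.inl hy13)⟩) (Y2 := ⟨y23, Or.inr (Or.inl hy23)⟩)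
      hQ1t h3 hy13 hy23 (fun h => c' (congrArg Subtype.val h)) (d3_pm l2) (d3_pm l3)
      (pmeets_symm p13c) (pmeets_symm p23c)
    exact ⟨Q.1, Or.inl hQ1t, w1, w2, w3⟩
  · exfalso
    have eq1 := lemD hb12 hb13 hb23 hbow (Z1 := Q) (Z2 := ⟨z1.1, Or.inr (Or.inr h1)⟩)
      (Y1 := ⟨y12, Or.inr (Or.inl hy12)⟩) (Y2 := ⟨y13, Or.inr (Or.inl hy13)⟩)
      hQ3t h1 hy12 hy13 (d3_pm l1) (d3_pm l2) (pmeets_symm p12a) (pmeets_symm p13a)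
    have eq2 := lemD hb12 hb13 hb23 hbow (Z1 := Q) (Z2 := ⟨z2.1, Or.inr (Or.inr h2)⟩)
      (Y1 := ⟨y12, Or.inr (Or.inl hy12)⟩) (Y2 := ⟨y23, Or.inr (Or.inl hy23)⟩)
      hQ3t h2 hy12 hy23 (d3_pm l1) (d3_pm l3) (pmeets_symm p12b) (pmeets_symm p23b)
    rcases eq1 with eq1 | eq1
    · rcases eq2 with eq2 | eq2
      · exact e12 (Subtype.ext (congrArg (fun t : PSv Λ b => t.1) (eq1.symm.trans eq2)))
      · exact b' (congrArg Subtype.val eq2)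
    · exact a (congrArg Subtype.val eq1)

include hD hadm

lemma mixedX {zA zB zC : QSv Λ b}
    (hA : zA.1.1 = {b 3}) (hB : zB.1.1 = {b 3}) (hC : zC.1.1 = {b 3})
    {xP xQ yR : PVertex Λ}
    (hxP : xP.1 = {b 1}) (hxQ : xQ.1 = {b 1}) (hyR : yR.1 = {b 2})
    (pPA : pmeets xP zA.1) (pPB : pmeets xP zB.1)
    (pQA : pmeets xQ zA.1) (pQC : pmeets xQ zC.1)
    (pRB : pmeets yR zB.1) (pRC : pmeets yR zC.1) :
    ∃ v : PVertex Λ, (v.1 = {b 1} ∨ v.1 = {b 2}) ∧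
      pmeets v zA.1 ∧ pmeets v zB.1 ∧ pmeets v zC.1 := by
  by_cases he : xP = xQ
  · exact ⟨xP, Or.inl hxP, pPA, pPB, by rw [he]; exact pQC⟩
  · have hP : pmeets xP yR := ptrans hD hadm hxP hB hyR pPB (pmeets_symm pRB)
    have hQ : pmeets xQ yR := ptrans hD hadm hxQ hC hyR pQC (pmeets_symm pRC)
    have := lemC hb12 hb13 hb23 hbow (X1 := ⟨xP, Or.inl hxP⟩) (X2 := ⟨xQ, Or.inl hxQ⟩)
      (Z := ⟨zA.1, Or.inr (Or.inr hA)⟩) (Y := ⟨yR, Or.inr (Or.inl hyR)⟩)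
      hxP hxQ hA hyR (fun h => he (congrArg Subtype.val h)) pPA hP pQA hQ
    exact ⟨yR, Or.inr hyR, pmeets_symm this, pRB, pRC⟩

lemma mixedY {zA zB zC : QSv Λ b}
    (hA : zA.1.1 = {b 3}) (hB : zB.1.1 = {b 3}) (hC : zC.1.1 = {b 3})
    {y1 y2 xP : PVertex Λ}
    (hy1 : y1.1 = {b 2}) (hy2 : y2.1 = {b 2}) (hxP : xP.1 = {b 1})
    (p1A : pmeets y1 zA.1) (p1B : pmeets y1 zB.1)
    (p2A : pmeets y2 zA.1) (p2C : pmeets y2 zC.1)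
    (pPB : pmeets xP zB.1) (pPC : pmeets xP zC.1) :
    ∃ v : PVertex Λ, (v.1 = {b 1} ∨ v.1 = {b 2}) ∧
      pmeets v zA.1 ∧ pmeets v zB.1 ∧ pmeets v zC.1 := by
  by_cases he : y1 = y2
  · exact ⟨y1, Or.inr hy1, p1A, p1B, by rw [he]; exact p2C⟩
  · have h1 : pmeets xP y1 := ptrans hD hadm hxP hB hy1 pPB (pmeets_symm p1B)
    have h2 : pmeets xP y2 := ptrans hD hadm hxP hC hy2 pPC (pmeets_symm p2C)
    have := lemE hb12 hb13 hb23 hbow (X := ⟨xP, Or.inl hxP⟩)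
      (Z := ⟨zA.1, Or.inr (Or.inr hA)⟩) (Y1 := ⟨y1, Or.inr (Or.inl hy1)⟩)
      (Y2 := ⟨y2, Or.inr (Or.inl hy2)⟩) hxP hA hy1 hy2
      (fun h => he (congrArg Subtype.val h)) h1 h2 (pmeets_symm p1A) (pmeets_symm p2A)
    exact ⟨xP, Or.inl hxP, this, pPB, pPC⟩

lemma core_zzz
    (hWUF : RelWeaklyUpwardFlag (fun v w : {v : PVertex Λ // D3Ok b v} => d3Lt b v.1 w.1))
    (hWDF : RelWeaklyDownwardFlag (fun v w : {v : PVertex Λ // D3Ok b v} => d3Lt b v.1 w.1))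
    {z1 z2 z3 : QSv Λ b}
    (h1 : z1.1.1 = {b 3}) (h2 : z2.1.1 = {b 3}) (h3 : z3.1.1 = {b 3})
    (e12 : z1 ≠ z2) (e13 : z1 ≠ z3) (e23 : z2 ≠ z3)
    (L12 : ∃ q : QSv Λ b, RelLe (fun v w : QSv Λ b => SubLt b 2 v.1 w.1) q z1 ∧
      RelLe (fun v w : QSv Λ b => SubLt b 2 v.1 w.1) q z2)
    (L13 : ∃ q : QSv Λ b, RelLe (fun v w : QSv Λ b => SubLt b 2 v.1 w.1) q z1 ∧
      RelLe (fun v w : QSv Λ b => SubLt b 2 v.1 w.1) q z3)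
    (L23 : ∃ q : QSv Λ b, RelLe (fun v w : QSv Λ b => SubLt b 2 v.1 w.1) q z2 ∧
      RelLe (fun v w : QSv Λ b => SubLt b 2 v.1 w.1) q z3) :
    ∃ q : QSv Λ b, RelLe (fun v w : QSv Λ b => SubLt b 2 v.1 w.1) q z1 ∧
      RelLe (fun v w : QSv Λ b => SubLt b 2 v.1 w.1) q z2 ∧
      RelLe (fun v w : QSv Λ b => SubLt b 2 v.1 w.1) q z3 := by
  have done : ∀ v : PVertex Λ, (v.1 = {b 1} ∨ v.1 = {b 2}) →
      pmeets v z1.1 → pmeets v z2.1 → pmeets v z3.1 →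
      ∃ q : QSv Λ b, RelLe (fun v w : QSv Λ b => SubLt b 2 v.1 w.1) q z1 ∧
        RelLe (fun v w : QSv Λ b => SubLt b 2 v.1 w.1) q z2 ∧
        RelLe (fun v w : QSv Λ b => SubLt b 2 v.1 w.1) q z3 :=
    fun v hv a1 a2 a3 => ⟨⟨v, qsOfTau1 v hv⟩, Or.inl (slt_tau1 hv (Or.inr h1) a1),
      Or.inl (slt_tau1 hv (Or.inr h2) a2), Or.inl (slt_tau1 hv (Or.inr h3) a3)⟩
  rcases zz_LB hb12 hb13 hb23 h1 h2 e12 L12 with ⟨x12, hx12, p12a, p12b⟩ |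
      ⟨y12, hy12, p12a, p12b⟩ <;>
    rcases zz_LB hb12 hb13 hb23 h1 h3 e13 L13 with ⟨x13, hx13, p13a, p13c⟩ |
      ⟨y13, hy13, p13a, p13c⟩ <;>
    rcases zz_LB hb12 hb13 hb23 h2 h3 e23 L23 with ⟨x23, hx23, p23b, p23c⟩ |
      ⟨y23, hy23, p23b, p23c⟩
  · obtain ⟨v, hv, a1, a2, a3⟩ := allX hb12 hb13 hb23 hbow hWUF h1 h2 h3 e12 hx12 hx13 hx23
      p12a p12b p13a p13c p23b p23c
    exact done v hv a1 a2 a3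
  · obtain ⟨v, hv, aA, aB, aC⟩ := mixedX hb12 hb13 hb23 hD hadm hbow h1 h2 h3
      hx12 hx13 hy23 p12a p12b p13a p13c p23b p23c
    exact done v hv aA aB aC
  · obtain ⟨v, hv, aA, aB, aC⟩ := mixedX hb12 hb13 hb23 hD hadm hbow h2 h1 h3
      hx12 hx23 hy13 p12b p12a p23b p23c p13a p13c
    exact done v hv aB aA aC
  · obtain ⟨v, hv, aA, aB, aC⟩ := mixedY hb12 hb13 hb23 hD hadm hbow h3 h1 h2
      hy13 hy23 hx12 p13c p13a p23c p23b p12a p12b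
    exact done v hv aB aC aA
  · obtain ⟨v, hv, aA, aB, aC⟩ := mixedX hb12 hb13 hb23 hD hadm hbow h3 h1 h2
      hx13 hx23 hy12 p13c p13a p23c p23b p12a p12b
    exact done v hv aB aC aA
  · obtain ⟨v, hv, aA, aB, aC⟩ := mixedY hb12 hb13 hb23 hD hadm hbow h2 h1 h3
      hy12 hy23 hx13 p12b p12a p23b p23c p13a p13c
    exact done v hv aB aA aC
  · obtain ⟨v, hv, aA, aB, aC⟩ := mixedY hb12 hb13 hb23 hD hadm hbow h1 h2 h3
      hy12 hy13 hx23 p12a p12b p13a p13c p23b p23c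
    exact done v hv aA aB aC
  · obtain ⟨v, hv, a1, a2, a3⟩ := allY hb12 hb13 hb23 hbow hWDF h1 h2 h3 e12 hy12 hy13 hy23
      p12a p12b p13a p13c p23b p23c
    exact done v hv a1 a2 a3

end Cores2

end CoxDiagram

end AuxZZZ
section AuxMain

namespace CoxDiagram

variable {S : Type*} {Λ : CoxDiagram S} {b : ℕ → S}

section Main

variable (hb12 : b 1 ≠ b 2) (hb13 : b 1 ≠ b 3) (hb23 : b 2 ≠ b 3)
  (hD : IsDLike Λ 2 b) (hadm : Admissible Λ (DSet b 2))
  (hbow : RelBowtieFree (fun v w : {v : PVertex Λ // D3Ok b v} => d3Lt b v.1 w.1))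

include hb12 hb13 hb23 hD hadm hbow

lemma mainForward
    (hWUF : RelWeaklyUpwardFlag (fun v w : {v : PVertex Λ // D3Ok b v} => d3Lt b v.1 w.1))
    (hWDF : RelWeaklyDownwardFlag (fun v w : {v : PVertex Λ // D3Ok b v} => d3Lt b v.1 w.1)) :
    RelDownwardFlag (fun v w : {v : PVertex Λ // SubOk b 2 v} => SubLt b 2 v.1 w.1) := by
  intro p1 p2 p3 h12 h23 h13
  by_cases e12 : p1 = p2
  · obtain ⟨q, a, c⟩ := h13
    exact ⟨q, a, e12 ▸ a, c⟩
  by_cases e13 : p1 = p3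
  · obtain ⟨q, a, c⟩ := h12
    exact ⟨q, a, c, e13 ▸ a⟩
  by_cases e23 : p2 = p3
  · obtain ⟨q, a, c⟩ := h12
    exact ⟨q, a, c, e23 ▸ c⟩
  have sw : ∀ {p q : QSv Λ b},
      (∃ r : QSv Λ b, RelLe (fun v w : QSv Λ b => SubLt b 2 v.1 w.1) r p ∧
        RelLe (fun v w : QSv Λ b => SubLt b 2 v.1 w.1) r q) →
      (∃ r : QSv Λ b, RelLe (fun v w : QSv Λ b => SubLt b 2 v.1 w.1) r q ∧
        RelLe (fun v w : QSv Λ b => SubLt b 2 v.1 w.1) r p) :=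
    fun ⟨r, a, c⟩ => ⟨r, c, a⟩
  have red : ∀ p q : QSv Λ b, (p.1.1 = {b 1} ∨ p.1.1 = {b 2}) →
      (∃ r : QSv Λ b, RelLe (fun v w : QSv Λ b => SubLt b 2 v.1 w.1) r p ∧
        RelLe (fun v w : QSv Λ b => SubLt b 2 v.1 w.1) r q) →
      RelLe (fun v w : QSv Λ b => SubLt b 2 v.1 w.1) p q := by
    rintro p q hp ⟨r, hr1, hr2⟩
    rcases hr1 with hl | he
    · exfalso
      obtain ⟨-, k, l, tk, tl, hkl⟩ := hl
      have hl1 : l = 1 :=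
        hp.elim (fun h => tau_of1 hb12 hb13 h tl) (fun h => tau_of2 hb12 hb23 h tl)
      have := tau_ge1 tk
      omega
    · rw [← he]; exact hr2
  by_cases c1 : p1.1.1 = {b 1} ∨ p1.1.1 = {b 2}
  · exact ⟨p1, Or.inr rfl, red p1 p2 c1 h12, red p1 p3 c1 h13⟩
  by_cases c2 : p2.1.1 = {b 1} ∨ p2.1.1 = {b 2}
  · exact ⟨p2, red p2 p1 c2 (sw h12), Or.inr rfl, red p2 p3 c2 h23⟩
  by_cases c3 : p3.1.1 = {b 1} ∨ p3.1.1 = {b 2}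
  · exact ⟨p3, red p3 p1 c3 (sw h13), red p3 p2 c3 (sw h23), Or.inr rfl⟩
  have t1 : p1.1.1 = ({b 1, b 2} : Set S) ∨ p1.1.1 = {b 3} := by
    rcases subok_cases p1 with h | h | h | h
    · exact Or.inl h
    · exact (c1 (Or.inl h)).elim
    · exact (c1 (Or.inr h)).elim
    · exact Or.inr h
  have t2 : p2.1.1 = ({b 1, b 2} : Set S) ∨ p2.1.1 = {b 3} := by
    rcases subok_cases p2 with h | h | h | h
    · exact Or.inl h
    · exact (c2 (Or.inl h)).elim
    · exact (c2 (Or.inr h)).elim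
    · exact Or.inr h
  have t3 : p3.1.1 = ({b 1, b 2} : Set S) ∨ p3.1.1 = {b 3} := by
    rcases subok_cases p3 with h | h | h | h
    · exact Or.inl h
    · exact (c3 (Or.inl h)).elim
    · exact (c3 (Or.inr h)).elim
    · exact Or.inr h
  rcases t1 with m1 | w1 <;> rcases t2 with m2 | w2 <;> rcases t3 with m3 | w3
  · exact core_mmm hb12 hb13 hb23 m1 m2 m3 e12 e13 e23 h12 h13 h23
  · exact core_mmz hb12 hb13 hb23 hD hadm hbow m1 m2 w3 e12 h12 h13 h23
  · obtain ⟨q, ha, hb', hc⟩ := core_mmz hb12 hb13 hb23 hD hadm hbow m1 m3 w2 e13 h13 h12 (sw h23)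
    exact ⟨q, ha, hc, hb'⟩
  · exact core_mzz hb12 hb13 hb23 hD hadm hbow m1 w2 w3 e23 h12 h13 h23
  · obtain ⟨q, ha, hb', hc⟩ := core_mmz hb12 hb13 hb23 hD hadm hbow m2 m3 w1 e23 h23 (sw h12) (sw h13)
    exact ⟨q, hc, ha, hb'⟩
  · obtain ⟨q, ha, hb', hc⟩ := core_mzz hb12 hb13 hb23 hD hadm hbow m2 w1 w3 e13 (sw h12) h23 h13
    exact ⟨q, hb', ha, hc⟩
  · obtain ⟨q, ha, hb', hc⟩ := core_mzz hb12 hb13 hb23 hD hadm hbow m3 w1 w2 e12 (sw h13) (sw h23) h12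
    exact ⟨q, hb', hc, ha⟩
  · exact core_zzz hb12 hb13 hb23 hD hadm hbow hWUF hWDF w1 w2 w3 e12 e13 e23 h12 h13 h23

lemma mainBack1
    (hQ : RelDownwardFlag (fun v w : {v : PVertex Λ // SubOk b 2 v} => SubLt b 2 v.1 w.1)) :
    RelWeaklyUpwardFlag (fun v w : {v : PVertex Λ // D3Ok b v} => d3Lt b v.1 w.1) := by
  intro p1 p2 p3 h12 h23 h13
  by_cases e12 : p1 = p2
  · obtain ⟨q, a, c, -⟩ := h23
    exact ⟨q, e12 ▸ a, a, c⟩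
  by_cases e13 : p1 = p3
  · obtain ⟨q, a, c, -⟩ := h12
    exact ⟨q, a, c, e13 ▸ a⟩
  by_cases e23 : p2 = p3
  · obtain ⟨q, a, c, -⟩ := h12
    exact ⟨q, a, c, e23 ▸ c⟩
  obtain ⟨q12, h12a, h12b, h12m⟩ := h12
  obtain ⟨q23, h23a, h23b, h23m⟩ := h23
  obtain ⟨q13, h13a, h13b, h13m⟩ := h13
  have qt12 : q12.1.1 ≠ {b 2} := fun h => h12m (maxB2 hb12 hb23 h)
  have qt23 : q23.1.1 ≠ {b 2} := fun h => h23m (maxB2 hb12 hb23 h)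
  have qt13 : q13.1.1 ≠ {b 2} := fun h => h13m (maxB2 hb12 hb23 h)
  have hstep : ∀ (p p' q : PSv Λ b), p ≠ p' →
      RelLe (fun v w : PSv Λ b => d3Lt b v.1 w.1) p q →
      RelLe (fun v w : PSv Λ b => d3Lt b v.1 w.1) p' q → q.1.1 ≠ {b 2} →
      p = q ∨ (p.1.1 = {b 1} ∧ q.1.1 = {b 3} ∧ pmeets p.1 q.1) := by
    intro p p' q hne h1 h2 hqt
    rcases h1 with hl | he
    · right
      rcases hl.2 with ⟨ha, hor⟩ | ⟨-, hb'⟩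
      · refine ⟨ha, ?_, hl.1⟩
        rcases hor with h | h
        · exact h
        · exact (hqt h).elim
      · exact (hqt hb').elim
    · exact Or.inl he
  have absorb : ∀ (pa pb pc q q' : PSv Λ b), pa = q →
      RelLe (fun v w : PSv Λ b => d3Lt b v.1 w.1) pb q →
      RelLe (fun v w : PSv Λ b => d3Lt b v.1 w.1) pa q' →
      RelLe (fun v w : PSv Λ b => d3Lt b v.1 w.1) pc q' → q'.1.1 ≠ {b 2} → pa ≠ pb →
      ∃ r : PSv Λ b, RelLe (fun v w : PSv Λ b => d3Lt b v.1 w.1) pa r ∧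
        RelLe (fun v w : PSv Λ b => d3Lt b v.1 w.1) pb r ∧
        RelLe (fun v w : PSv Λ b => d3Lt b v.1 w.1) pc r := by
    intro pa pb pc q q' heq hb' ha' hc' hqt hne
    have hba : RelLe (fun v w : PSv Λ b => d3Lt b v.1 w.1) pb pa := by rw [heq]; exact hb'
    rcases ha' with hl | he
    · exfalso
      rcases hba with hl2 | he2
      · have hpa3 : pa.1.1 = {b 3} := by
          rcases d3_tgt hl2 with h | h
          · exact h
          · rcases d3_src hl with h' | h'
            · exact (sne hb12 h' h).elim
            · exact h'
        rcases hl.2 with ⟨h', -⟩ | ⟨-, h'⟩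
        · exact sne hb13 h' hpa3
        · exact hqt h'
      · exact hne he2.symm
    · refine ⟨q', Or.inr he, ?_, hc'⟩
      rw [← he]; exact hba
  rcases hstep p1 p2 q12 e12 h12a h12b qt12 with he | w12
  · obtain ⟨r, a1, a2, a3⟩ := absorb p1 p2 p3 q12 q13 he h12b h13a h13b qt13 e12
    exact ⟨r, a1, a2, a3⟩
  rcases hstep p2 p1 q12 (Ne.symm e12) h12b h12a qt12 with he | w21
  · obtain ⟨r, a1, a2, a3⟩ := absorb p2 p1 p3 q12 q23 he h12a h23a h23b qt23 (Ne.symm e12)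
    exact ⟨r, a2, a1, a3⟩
  rcases hstep p1 p3 q13 e13 h13a h13b qt13 with he | w13
  · obtain ⟨r, a1, a2, a3⟩ := absorb p1 p3 p2 q13 q12 he h13b h12a h12b qt12 e13
    exact ⟨r, a1, a3, a2⟩
  rcases hstep p3 p1 q13 (Ne.symm e13) h13b h13a qt13 with he | w31
  · obtain ⟨r, a1, a2, a3⟩ := absorb p3 p1 p2 q13 q23 he h13a h23b h23a qt23 (Ne.symm e13)
    exact ⟨r, a2, a3, a1⟩
  rcases hstep p2 p3 q23 e23 h23a h23b qt23 with he | w23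
  · obtain ⟨r, a1, a2, a3⟩ := absorb p2 p3 p1 q23 q12 he h23b h12b h12a qt12 e23
    exact ⟨r, a3, a1, a2⟩
  rcases hstep p3 p2 q23 (Ne.symm e23) h23b h23a qt23 with he | w32
  · obtain ⟨r, a1, a2, a3⟩ := absorb p3 p2 p1 q23 q13 he h23a h13b h13a qt13 (Ne.symm e23)
    exact ⟨r, a3, a2, a1⟩
  obtain ⟨hp1t, hq12t, pm112⟩ := w12
  obtain ⟨hp2t, -, pm212⟩ := w21
  obtain ⟨-, hq13t, pm113⟩ := w13
  obtain ⟨hp3t, -, pm313⟩ := w31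
  obtain ⟨-, hq23t, pm223⟩ := w23
  obtain ⟨-, -, pm323⟩ := w32
  by_cases hz12 : q12 = q13
  · exact ⟨q12, Or.inl (d3_mk13 hp1t hq12t pm112), Or.inl (d3_mk13 hp2t hq12t pm212),
      Or.inl (d3_mk13 hp3t hq12t (by rw [hz12]; exact pm313))⟩
  by_cases hz13 : q12 = q23
  · exact ⟨q12, Or.inl (d3_mk13 hp1t hq12t pm112), Or.inl (d3_mk13 hp2t hq12t pm212),
      Or.inl (d3_mk13 hp3t hq12t (by rw [hz13]; exact pm323))⟩
  by_cases hz23 : q13 = q23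
  · exact ⟨q13, Or.inl (d3_mk13 hp1t hq13t pm113), Or.inl (d3_mk13 hp2t hq13t
      (by rw [hz23]; exact pm223)), Or.inl (d3_mk13 hp3t hq13t pm313)⟩
  obtain ⟨Q, hQ1, hQ2, hQ3⟩ := hQ ⟨q12.1, Or.inr ⟨3, by norm_num, by norm_num, hq12t⟩⟩
    ⟨q13.1, Or.inr ⟨3, by norm_num, by norm_num, hq13t⟩⟩
    ⟨q23.1, Or.inr ⟨3, by norm_num, by norm_num, hq23t⟩⟩
    ⟨⟨p1.1, qsOfTau1 p1.1 (Or.inl hp1t)⟩,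
      Or.inl (slt_tau1 (Or.inl hp1t) (Or.inr hq12t) pm112),
      Or.inl (slt_tau1 (Or.inl hp1t) (Or.inr hq13t) pm113)⟩
    ⟨⟨p3.1, qsOfTau1 p3.1 (Or.inl hp3t)⟩,
      Or.inl (slt_tau1 (Or.inl hp3t) (Or.inr hq13t) pm313),
      Or.inl (slt_tau1 (Or.inl hp3t) (Or.inr hq23t) pm323)⟩
    ⟨⟨p2.1, qsOfTau1 p2.1 (Or.inl hp2t)⟩,
      Or.inl (slt_tau1 (Or.inl hp2t) (Or.inr hq12t) pm212),
      Or.inl (slt_tau1 (Or.inl hp2t) (Or.inr hq23t) pm223)⟩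
  have hne1213 : q12.1 ≠ q13.1 := fun h => hz12 (Subtype.ext h)
  have hne1223 : q12.1 ≠ q23.1 := fun h => hz13 (Subtype.ext h)
  have hne1323 : q13.1 ≠ q23.1 := fun h => hz23 (Subtype.ext h)
  have sl1 : SubLt b 2 Q.1 q12.1 := by
    rcases hQ1 with l | e
    · exact l
    · exfalso
      rcases hQ2 with l' | e'
      · rw [e] at l'
        obtain ⟨-, k, l'', tk, tl, hkl⟩ := l'
        have := tau_of3 hb12 hb13 hb23 hq12t tk
        have := tau_of3 hb12 hb13 hb23 hq13t tl
        omega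
      · exact hne1213 (congrArg (fun t : QSv Λ b => t.1) (e.symm.trans e'))
  have sl2 : SubLt b 2 Q.1 q13.1 := by
    rcases hQ2 with l | e
    · exact l
    · exfalso
      rcases hQ1 with l' | e'
      · rw [e] at l'
        obtain ⟨-, k, l'', tk, tl, hkl⟩ := l'
        have := tau_of3 hb12 hb13 hb23 hq13t tk
        have := tau_of3 hb12 hb13 hb23 hq12t tl
        omega
      · exact hne1213 (congrArg (fun t : QSv Λ b => t.1) (e'.symm.trans e))
  have sl3 : SubLt b 2 Q.1 q23.1 := by
    rcases hQ3 with l | e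
    · exact l
    · exfalso
      rcases hQ1 with l' | e'
      · rw [e] at l'
        obtain ⟨-, k, l'', tk, tl, hkl⟩ := l'
        have := tau_of3 hb12 hb13 hb23 hq23t tk
        have := tau_of3 hb12 hb13 hb23 hq12t tl
        omega
      · exact hne1223 (congrArg (fun t : QSv Λ b => t.1) (e'.symm.trans e))
  have xcase : ∀ x : PVertex Λ, x.1 = {b 1} →
      pmeets x q12.1 → pmeets x q13.1 → pmeets x q23.1 →
      ∃ r : PSv Λ b, RelLe (fun v w : PSv Λ b => d3Lt b v.1 w.1) p1 r ∧
        RelLe (fun v w : PSv Λ b => d3Lt b v.1 w.1) p2 r ∧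
        RelLe (fun v w : PSv Λ b => d3Lt b v.1 w.1) p3 r := by
    intro x hx px12 px13 px23
    by_cases hxp : x = p1.1
    · exact ⟨q23, Or.inl (d3_mk13 hp1t hq23t (by rw [← hxp]; exact px23)),
        Or.inl (d3_mk13 hp2t hq23t pm223), Or.inl (d3_mk13 hp3t hq23t pm323)⟩
    · exfalso
      exact hz12 (lemA hb12 hb13 hb23 hbow (X1 := ⟨x, Or.inl hx⟩) (X2 := p1)
        (Z1 := q12) (Z2 := q13) hx hp1t hq12t hq13t
        (fun h => hxp (congrArg Subtype.val h)) px12 px13 pm112 pm113)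
  rcases subok_cases Q with hQm | hQ1t | hQ2t | hQ3t
  · obtain ⟨xq, yq, hxq, hyq, pxq, pyq, -⟩ := midPi hQm
    exact xcase xq hxq (mid_absorb hxq hQm pxq sl1.1) (mid_absorb hxq hQm pxq sl2.1)
      (mid_absorb hxq hQm pxq sl3.1)
  · exact xcase Q.1 hQ1t sl1.1 sl2.1 sl3.1
  · have a1 : pmeets p1.1 Q.1 := ptrans hD hadm hp1t hq12t hQ2t pm112 (pmeets_symm sl1.1)
    have a2 : pmeets p2.1 Q.1 := ptrans hD hadm hp2t hq12t hQ2t pm212 (pmeets_symm sl1.1)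
    have a3 : pmeets p3.1 Q.1 := ptrans hD hadm hp3t hq13t hQ2t pm313 (pmeets_symm sl2.1)
    exact ⟨⟨Q.1, Or.inr (Or.inl hQ2t)⟩, Or.inl (d3_mk12 hp1t hQ2t a1),
      Or.inl (d3_mk12 hp2t hQ2t a2), Or.inl (d3_mk12 hp3t hQ2t a3)⟩
  · exfalso
    obtain ⟨-, k, l, tk, tl, hkl⟩ := sl1
    have := tau_of3 hb12 hb13 hb23 hQ3t tk
    have := tau_of3 hb12 hb13 hb23 hq12t tl
    omega

end Main

end CoxDiagram

end AuxMain
section AuxMain2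

namespace CoxDiagram

variable {S : Type*} {Λ : CoxDiagram S} {b : ℕ → S}

section Main2

variable (hb12 : b 1 ≠ b 2) (hb13 : b 1 ≠ b 3) (hb23 : b 2 ≠ b 3)
  (hD : IsDLike Λ 2 b) (hadm : Admissible Λ (DSet b 2))
  (hbow : RelBowtieFree (fun v w : {v : PVertex Λ // D3Ok b v} => d3Lt b v.1 w.1))

include hb12 hb13 hb23 hD hadm hbow

lemma mainBack2
    (hQ : RelDownwardFlag (fun v w : {v : PVertex Λ // SubOk b 2 v} => SubLt b 2 v.1 w.1)) :
    RelWeaklyDownwardFlag (fun v w : {v : PVertex Λ // D3Ok b v} => d3Lt b v.1 w.1) := by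
  intro p1 p2 p3 h12 h23 h13
  by_cases e12 : p1 = p2
  · obtain ⟨q, a, c, -⟩ := h23
    exact ⟨q, e12 ▸ a, a, c⟩
  by_cases e13 : p1 = p3
  · obtain ⟨q, a, c, -⟩ := h12
    exact ⟨q, a, c, e13 ▸ a⟩
  by_cases e23 : p2 = p3
  · obtain ⟨q, a, c, -⟩ := h12
    exact ⟨q, a, c, e23 ▸ c⟩
  obtain ⟨q12, h12a, h12b, h12m⟩ := h12
  obtain ⟨q23, h23a, h23b, h23m⟩ := h23
  obtain ⟨q13, h13a, h13b, h13m⟩ := h13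
  have qt12 : q12.1.1 ≠ {b 1} := fun h => h12m (minB1 hb12 hb13 h)
  have qt23 : q23.1.1 ≠ {b 1} := fun h => h23m (minB1 hb12 hb13 h)
  have qt13 : q13.1.1 ≠ {b 1} := fun h => h13m (minB1 hb12 hb13 h)
  have hstep : ∀ (p q : PSv Λ b),
      RelLe (fun v w : PSv Λ b => d3Lt b v.1 w.1) q p → q.1.1 ≠ {b 1} →
      p = q ∨ (p.1.1 = {b 2} ∧ q.1.1 = {b 3} ∧ pmeets q.1 p.1) := by
    intro p q h1 hqt
    rcases h1 with hl | he
    · right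
      rcases hl.2 with ⟨hq1, -⟩ | ⟨hq3, hp2⟩
      · exact (hqt hq1).elim
      · exact ⟨hp2, hq3, hl.1⟩
    · exact Or.inl he.symm
  have absorb : ∀ (pa pb pc q q' : PSv Λ b), pa = q →
      RelLe (fun v w : PSv Λ b => d3Lt b v.1 w.1) q pb →
      RelLe (fun v w : PSv Λ b => d3Lt b v.1 w.1) q' pa →
      RelLe (fun v w : PSv Λ b => d3Lt b v.1 w.1) q' pc → q'.1.1 ≠ {b 1} → pa ≠ pb →
      ∃ r : PSv Λ b, RelLe (fun v w : PSv Λ b => d3Lt b v.1 w.1) r pa ∧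
        RelLe (fun v w : PSv Λ b => d3Lt b v.1 w.1) r pb ∧
        RelLe (fun v w : PSv Λ b => d3Lt b v.1 w.1) r pc := by
    intro pa pb pc q q' heq hb' ha' hc' hqt hne
    have hab : RelLe (fun v w : PSv Λ b => d3Lt b v.1 w.1) pa pb := by rw [heq]; exact hb'
    rcases ha' with hl | he
    · exfalso
      rcases hab with hl2 | he2
      · have hpa3 : pa.1.1 = {b 3} := by
          rcases d3_tgt hl with h | h
          · exact h
          · rcases d3_src hl2 with h' | h'
            · exact (sne hb12 h' h).elim
            · exact h'
        rcases hl.2 with ⟨hq'1, -⟩ | ⟨-, hpa2⟩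
        · exact hqt hq'1
        · exact sne hb23 hpa2 hpa3
      · exact hne he2
    · refine ⟨q', Or.inr he, ?_, hc'⟩
      rw [he]; exact hab
  rcases hstep p1 q12 h12a qt12 with he | w12
  · obtain ⟨r, a1, a2, a3⟩ := absorb p1 p2 p3 q12 q13 he h12b h13a h13b qt13 e12
    exact ⟨r, a1, a2, a3⟩
  rcases hstep p2 q12 h12b qt12 with he | w21
  · obtain ⟨r, a1, a2, a3⟩ := absorb p2 p1 p3 q12 q23 he h12a h23a h23b qt23 (Ne.symm e12)
    exact ⟨r, a2, a1, a3⟩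
  rcases hstep p1 q13 h13a qt13 with he | w13
  · obtain ⟨r, a1, a2, a3⟩ := absorb p1 p3 p2 q13 q12 he h13b h12a h12b qt12 e13
    exact ⟨r, a1, a3, a2⟩
  rcases hstep p3 q13 h13b qt13 with he | w31
  · obtain ⟨r, a1, a2, a3⟩ := absorb p3 p1 p2 q13 q23 he h13a h23b h23a qt23 (Ne.symm e13)
    exact ⟨r, a2, a3, a1⟩
  rcases hstep p2 q23 h23a qt23 with he | w23
  · obtain ⟨r, a1, a2, a3⟩ := absorb p2 p3 p1 q23 q12 he h23b h12b h12a qt12 e23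
    exact ⟨r, a3, a1, a2⟩
  rcases hstep p3 q23 h23b qt23 with he | w32
  · obtain ⟨r, a1, a2, a3⟩ := absorb p3 p2 p1 q23 q13 he h23a h13b h13a qt13 (Ne.symm e23)
    exact ⟨r, a3, a2, a1⟩
  obtain ⟨hp1t, hq12t, pm112⟩ := w12
  obtain ⟨hp2t, -, pm212⟩ := w21
  obtain ⟨-, hq13t, pm113⟩ := w13
  obtain ⟨hp3t, -, pm313⟩ := w31
  obtain ⟨-, hq23t, pm223⟩ := w23
  obtain ⟨-, -, pm323⟩ := w32
  by_cases hz12 : q12 = q13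
  · exact ⟨q12, Or.inl (d3_mk32 hq12t hp1t pm112), Or.inl (d3_mk32 hq12t hp2t pm212),
      Or.inl (d3_mk32 hq12t hp3t (by rw [hz12]; exact pm313))⟩
  by_cases hz13 : q12 = q23
  · exact ⟨q12, Or.inl (d3_mk32 hq12t hp1t pm112), Or.inl (d3_mk32 hq12t hp2t pm212),
      Or.inl (d3_mk32 hq12t hp3t (by rw [hz13]; exact pm323))⟩
  by_cases hz23 : q13 = q23
  · exact ⟨q13, Or.inl (d3_mk32 hq13t hp1t pm113), Or.inl (d3_mk32 hq13t hp2t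
      (by rw [hz23]; exact pm223)), Or.inl (d3_mk32 hq13t hp3t pm313)⟩
  obtain ⟨Q, hQ1, hQ2, hQ3⟩ := hQ ⟨q12.1, Or.inr ⟨3, by norm_num, by norm_num, hq12t⟩⟩
    ⟨q13.1, Or.inr ⟨3, by norm_num, by norm_num, hq13t⟩⟩
    ⟨q23.1, Or.inr ⟨3, by norm_num, by norm_num, hq23t⟩⟩
    ⟨⟨p1.1, qsOfTau1 p1.1 (Or.inr hp1t)⟩,
      Or.inl (slt_tau1 (Or.inr hp1t) (Or.inr hq12t) (pmeets_symm pm112)),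
      Or.inl (slt_tau1 (Or.inr hp1t) (Or.inr hq13t) (pmeets_symm pm113))⟩
    ⟨⟨p3.1, qsOfTau1 p3.1 (Or.inr hp3t)⟩,
      Or.inl (slt_tau1 (Or.inr hp3t) (Or.inr hq13t) (pmeets_symm pm313)),
      Or.inl (slt_tau1 (Or.inr hp3t) (Or.inr hq23t) (pmeets_symm pm323))⟩
    ⟨⟨p2.1, qsOfTau1 p2.1 (Or.inr hp2t)⟩,
      Or.inl (slt_tau1 (Or.inr hp2t) (Or.inr hq12t) (pmeets_symm pm212)),
      Or.inl (slt_tau1 (Or.inr hp2t) (Or.inr hq23t) (pmeets_symm pm223))⟩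
  have hne1213 : q12.1 ≠ q13.1 := fun h => hz12 (Subtype.ext h)
  have hne1223 : q12.1 ≠ q23.1 := fun h => hz13 (Subtype.ext h)
  have sl1 : SubLt b 2 Q.1 q12.1 := by
    rcases hQ1 with l | e
    · exact l
    · exfalso
      rcases hQ2 with l' | e'
      · rw [e] at l'
        obtain ⟨-, k, l'', tk, tl, hkl⟩ := l'
        have := tau_of3 hb12 hb13 hb23 hq12t tk
        have := tau_of3 hb12 hb13 hb23 hq13t tl
        omega
      · exact hne1213 (congrArg (fun t : QSv Λ b => t.1) (e.symm.trans e'))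
  have sl2 : SubLt b 2 Q.1 q13.1 := by
    rcases hQ2 with l | e
    · exact l
    · exfalso
      rcases hQ1 with l' | e'
      · rw [e] at l'
        obtain ⟨-, k, l'', tk, tl, hkl⟩ := l'
        have := tau_of3 hb12 hb13 hb23 hq13t tk
        have := tau_of3 hb12 hb13 hb23 hq12t tl
        omega
      · exact hne1213 (congrArg (fun t : QSv Λ b => t.1) (e'.symm.trans e))
  have sl3 : SubLt b 2 Q.1 q23.1 := by
    rcases hQ3 with l | e
    · exact l
    · exfalso
      rcases hQ1 with l' | e'
      · rw [e] at l'
        obtain ⟨-, k, l'', tk, tl, hkl⟩ := l'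
        have := tau_of3 hb12 hb13 hb23 hq23t tk
        have := tau_of3 hb12 hb13 hb23 hq12t tl
        omega
      · exact hne1223 (congrArg (fun t : QSv Λ b => t.1) (e'.symm.trans e))
  have ycase : ∀ y : PVertex Λ, y.1 = {b 2} →
      pmeets y q12.1 → pmeets y q13.1 → pmeets y q23.1 →
      ∃ r : PSv Λ b, RelLe (fun v w : PSv Λ b => d3Lt b v.1 w.1) r p1 ∧
        RelLe (fun v w : PSv Λ b => d3Lt b v.1 w.1) r p2 ∧
        RelLe (fun v w : PSv Λ b => d3Lt b v.1 w.1) r p3 := by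
    intro y hy py12 py13 py23
    by_cases hyp : y = p1.1
    · exact ⟨q23, Or.inl (d3_mk32 hq23t hp1t (pmeets_symm (by rw [← hyp]; exact py23))),
        Or.inl (d3_mk32 hq23t hp2t pm223), Or.inl (d3_mk32 hq23t hp3t pm323)⟩
    · exfalso
      have := lemD hb12 hb13 hb23 hbow (Z1 := q12) (Z2 := q13)
        (Y1 := ⟨y, Or.inr (Or.inl hy)⟩) (Y2 := p1) hq12t hq13t hy hp1t
        (pmeets_symm py12) pm112 (pmeets_symm py13) pm113
      rcases this with h | h
      · exact hz12 h
      · exact hyp (congrArg Subtype.val h)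
  rcases subok_cases Q with hQm | hQ1t | hQ2t | hQ3t
  · obtain ⟨xq, yq, hxq, hyq, pxq, pyq, -⟩ := midPi hQm
    have hQm' : Q.1.1 = ({b 2, b 1} : Set S) := by rw [hQm, Set.pair_comm]
    exact ycase yq hyq (mid_absorb hyq hQm' pyq sl1.1) (mid_absorb hyq hQm' pyq sl2.1)
      (mid_absorb hyq hQm' pyq sl3.1)
  · have a1 : pmeets Q.1 p1.1 := ptrans hD hadm hQ1t hq12t hp1t sl1.1 pm112
    have a2 : pmeets Q.1 p2.1 := ptrans hD hadm hQ1t hq12t hp2t sl1.1 pm212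
    have a3 : pmeets Q.1 p3.1 := ptrans hD hadm hQ1t hq13t hp3t sl2.1 pm313
    exact ⟨⟨Q.1, Or.inl hQ1t⟩, Or.inl (d3_mk12 hQ1t hp1t a1),
      Or.inl (d3_mk12 hQ1t hp2t a2), Or.inl (d3_mk12 hQ1t hp3t a3)⟩
  · exact ycase Q.1 hQ2t sl1.1 sl2.1 sl3.1
  · exfalso
    obtain ⟨-, k, l, tk, tl, hkl⟩ := sl1
    have := tau_of3 hb12 hb13 hb23 hQ3t tk
    have := tau_of3 hb12 hb13 hb23 hq12t tl
    omega

end Main2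

end CoxDiagram

end AuxMain2
/-- Let `Λ` be a Coxeter diagram containing an admissible `D₃`-like
subdiagram `Λ′` with consecutive vertices `b 1, b 3, b 2` (a `D₃`-like diagram is a
`D_{n+1}`-like diagram with `n = 2`).  Suppose the vertex set of `Δ_{Λ,Λ′}` with the
partial order induced by `b 1 < b 3 < b 2` is bowtie free.  Then `Δ_{Λ,Λ′}` is weakly
flag if and only if the `(b 1, b 2)`-subdivision of `Δ_{Λ,Λ′}` is downward flag. -/
theorem weaklyFlag_iff_subdivision_downwardFlag {S : Type*} [Fintype S]
    (Λ : CoxDiagram S) (b : ℕ → S)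
    (hD : IsDLike Λ 2 b)
    (hadm : Admissible Λ (DSet b 2))
    (hbow : RelBowtieFree (fun v w : {v : PVertex Λ // D3Ok b v} => d3Lt b v.1 w.1)) :
    RelWeaklyFlag (fun v w : {v : PVertex Λ // D3Ok b v} => d3Lt b v.1 w.1) ↔
      RelDownwardFlag (fun v w : {v : PVertex Λ // SubOk b 2 v} => SubLt b 2 v.1 w.1) := by
  have hb12 : b 1 ≠ b 2 := fun h => by
    have := hD.2.1 1 2 (by norm_num) (by norm_num) (by norm_num) (by norm_num) h; omega
  have hb13 : b 1 ≠ b 3 := fun h => by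
    have := hD.2.1 1 3 (by norm_num) (by norm_num) (by norm_num) (by norm_num) h; omega
  have hb23 : b 2 ≠ b 3 := fun h => by
    have := hD.2.1 2 3 (by norm_num) (by norm_num) (by norm_num) (by norm_num) h; omega
  constructor
  · intro hW
    exact mainForward hb12 hb13 hb23 hD hadm hbow hW.1 hW.2
  · intro hQ
    exact ⟨mainBack1 hb12 hb13 hb23 hD hadm hbow hQ,
      mainBack2 hb12 hb13 hb23 hD hadm hbow hQ⟩
end
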